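/- arXiv:1412.3068 — 5 statements merged into one kernel-verified Lean document; each statement's English description precedes it below -/
import Mathlib

section
/- Let L be a Lie algebra of a set-arrangement 𝒜 on X satisfying the replacement condition, and let ℬ be a closed sub-arrangement of 𝒜 such that there is no A ∈ 𝒜 with |A| = 2 and |A ∩ supp(ℬ)| = 1. Then ker(π_ℬ) equals the Lie subalgebra of L generated by the images of the generators in X \ supp(ℬ). -/
open FreeLieAlgebra

section QuotAux
variable {C : Type*} [CommRing C] {L M : Type*} [LieRing L] [LieAlgebra C L]
  [LieRing M] [LieAlgebra C M]

/-- The quotient map `L → L ⧸ I` as a morphism of Lie algebras. -/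
noncomputable def quotLieHom (I : LieIdeal C L) : L →ₗ⁅C⁆ L ⧸ I :=
  { I.toSubmodule.mkQ with
    toFun := LieSubmodule.Quotient.mk (N := I)
    map_lie' := fun {x y} => LieSubmodule.Quotient.mk_bracket I x y }

@[simp] lemma quotLieHom_apply (I : LieIdeal C L) (x : L) :
    quotLieHom I x = LieSubmodule.Quotient.mk (N := I) x := rfl

/-- Lift of a Lie algebra morphism through a quotient by an ideal contained in its kernel. -/
noncomputable def quotLift (I : LieIdeal C L) (f : L →ₗ⁅C⁆ M) (h : ∀ z ∈ I, f z = 0) :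
    (L ⧸ I) →ₗ⁅C⁆ M :=
  { Submodule.liftQ I.toSubmodule f.toLinearMap (fun z hz => by
      simpa using h z hz) with
    toFun := Submodule.liftQ I.toSubmodule f.toLinearMap (fun z hz => by simpa using h z hz)
    map_lie' := fun {x y} => by
      obtain ⟨x, rfl⟩ := LieSubmodule.Quotient.surjective_mk' I x
      obtain ⟨y, rfl⟩ := LieSubmodule.Quotient.surjective_mk' I y
      exact f.map_lie x y }

@[simp] lemma quotLift_mk (I : LieIdeal C L) (f : L →ₗ⁅C⁆ M) (h : ∀ z ∈ I, f z = 0) (x : L) :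
    quotLift I f h (LieSubmodule.Quotient.mk (N := I) x) = f x := rfl

end QuotAux

/-- The free Lie algebra is generated, as a Lie algebra, by its generators. -/
lemma freeLie_mem_lieSpan_range {C : Type*} [CommRing C] {Y : Type*}
    (u : FreeLieAlgebra C Y) :
    u ∈ LieSubalgebra.lieSpan C (FreeLieAlgebra C Y) (Set.range (FreeLieAlgebra.of C)) := by
  set K := LieSubalgebra.lieSpan C (FreeLieAlgebra C Y) (Set.range (FreeLieAlgebra.of C))
  let back : FreeLieAlgebra C Y →ₗ⁅C⁆ K := FreeLieAlgebra.lift C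
    (fun y => ⟨FreeLieAlgebra.of C y, LieSubalgebra.subset_lieSpan (Set.mem_range_self y)⟩)
  have h : K.incl.comp back = LieHom.id := by
    apply FreeLieAlgebra.hom_ext
    intro y
    simp [back, FreeLieAlgebra.lift_of_apply]
  have hu : K.incl (back u) = u := by
    have := LieHom.congr_fun h u
    simpa using this
  rw [← hu]
  exact (back u).2


theorem lieSpan_induction_compat (R : Type*) {L : Type*} [CommRing R] [LieRing L]
    [LieAlgebra R L] {s : Set L} {p : L → Prop} {x : L}
    (h : x ∈ LieSubalgebra.lieSpan R L s) (mem : ∀ x ∈ s, p x) (zero : p 0)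
    (smul : ∀ (r : R) (x : L), p x → p (r • x)) (add : ∀ x y, p x → p y → p (x + y))
    (lie : ∀ x y, p x → p y → p ⁅x, y⁆) : p x :=
  LieSubalgebra.lieSpan_induction (R := R) (p := fun x _ => p x) (mem := mem) (zero := zero)
    (add := fun x y _ _ => add x y) (smul := fun r x _ => smul r x)
    (lie := fun x y _ _ => lie x y) h

/-- A set-arrangement on `X`: every member has at least two elements, two distinct members
meet in at most one element, and the union of all members is `X`. -/
def IsSetArrangement {X : Type*} (𝒜 : Set (Set X)) : Prop :=
  (∀ A ∈ 𝒜, 2 ≤ A.ncard) ∧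
    (∀ A ∈ 𝒜, ∀ B ∈ 𝒜, A ≠ B → (A ∩ B).Subsingleton) ∧
    ⋃₀ 𝒜 = Set.univ

variable (C : Type*) [CommRing C] {X : Type*}

/-- The inclusion `F(A) → F(X)` of free Lie algebras. -/
noncomputable def inclX (A : Set X) : FreeLieAlgebra C A →ₗ⁅C⁆ FreeLieAlgebra C X :=
  FreeLieAlgebra.lift C fun a => FreeLieAlgebra.of C (a : X)

/-- The inclusion `F(A) → F(S)` of free Lie algebras along `A ⊆ S`. -/
noncomputable def inclSub {A S : Set X} (h : A ⊆ S) :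
    FreeLieAlgebra C A →ₗ⁅C⁆ FreeLieAlgebra C S :=
  FreeLieAlgebra.lift C fun a => FreeLieAlgebra.of C (⟨a.1, h a.2⟩ : S)

/-- Admissibility of the relations: `R_A ⊆ [F(A), F(A)]`. -/
def AdmissibleRel (𝒜 : Set (Set X)) (Rel : ∀ A : Set X, Set (FreeLieAlgebra C A)) : Prop :=
  ∀ A ∈ 𝒜, Rel A ⊆ (LieAlgebra.derivedSeries C (FreeLieAlgebra C A) 1 : Set (FreeLieAlgebra C A))

/-- The defining ideal of a Lie algebra of a set-arrangement: generated by all `⁅x,y⁆` for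
pairs not contained in any member of `𝒜`, together with the relations `R_A`, `A ∈ 𝒜`. -/
noncomputable def definingIdeal (𝒜 : Set (Set X)) (Rel : ∀ A : Set X, Set (FreeLieAlgebra C A)) :
    LieIdeal C (FreeLieAlgebra C X) :=
  LieSubmodule.lieSpan C (FreeLieAlgebra C X)
    ({z | ∃ x y : X, (∀ A ∈ 𝒜, ¬({x, y} : Set X) ⊆ A) ∧ z = ⁅of C x, of C y⁆} ∪
      ⋃ A, ⋃ (_ : A ∈ 𝒜), inclX C A '' Rel A)

/-- The Lie algebra `L` of the set-arrangement `𝒜` with relations `Rel`. -/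
noncomputable abbrev ArrLie (𝒜 : Set (Set X)) (Rel : ∀ A : Set X, Set (FreeLieAlgebra C A)) :=
  FreeLieAlgebra C X ⧸ definingIdeal C 𝒜 Rel

/-- The quotient map `F(X) → L`. -/
noncomputable def arrMk (𝒜 : Set (Set X)) (Rel : ∀ A : Set X, Set (FreeLieAlgebra C A)) :
    FreeLieAlgebra C X → ArrLie C 𝒜 Rel :=
  LieSubmodule.Quotient.mk (N := definingIdeal C 𝒜 Rel)

/-- The ideal `⟨R_A⟩` of `F(A)`. -/
noncomputable def locIdeal (A : Set X) (Rel : ∀ A : Set X, Set (FreeLieAlgebra C A)) :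
    LieIdeal C (FreeLieAlgebra C A) :=
  LieSubmodule.lieSpan C (FreeLieAlgebra C A) (Rel A)

/-- The localized Lie algebra `L_A = F(A)/⟨R_A⟩`. -/
noncomputable abbrev LocLie (A : Set X) (Rel : ∀ A : Set X, Set (FreeLieAlgebra C A)) :=
  FreeLieAlgebra C A ⧸ locIdeal C A Rel

/-- The quotient map `F(A) → L_A`. -/
noncomputable def locMk (A : Set X) (Rel : ∀ A : Set X, Set (FreeLieAlgebra C A)) :
    FreeLieAlgebra C A → LocLie C A Rel :=
  LieSubmodule.Quotient.mk (N := locIdeal C A Rel)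

open Classical in
/-- The canonical Lie algebra map `F(X) → L_A` killing the generators outside `A`. -/
noncomputable def locProj (A : Set X) (Rel : ∀ A : Set X, Set (FreeLieAlgebra C A)) :
    FreeLieAlgebra C X →ₗ⁅C⁆ LocLie C A Rel :=
  FreeLieAlgebra.lift C fun x : X =>
    if h : x ∈ A then locMk C A Rel (of C (⟨x, h⟩ : A)) else 0

/-- The replacement condition. -/
def ReplacementCond (𝒜 : Set (Set X)) (Rel : ∀ A : Set X, Set (FreeLieAlgebra C A)) : Prop :=
  ∀ A ∈ 𝒜, 3 ≤ A.ncard → ∀ x ∈ A, (∃ B ∈ 𝒜, B ≠ A ∧ x ∈ B) →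
    (LieAlgebra.derivedSeries C (LocLie C A Rel) 1 : Set (LocLie C A Rel)) ⊆
      (LieSubalgebra.lieSpan C (LocLie C A Rel)
        {z | ∃ a : A, (a : X) ≠ x ∧ z = locMk C A Rel (of C a)} : Set (LocLie C A Rel))

/-- Lie monomials of weight `n` with respect to a weighting `d` of the generators. -/
inductive IsLieMonomial (d : X → ℕ) : FreeLieAlgebra C X → ℕ → Prop
  | of (x : X) : IsLieMonomial d (of C x) (d x)
  | lie {u v : FreeLieAlgebra C X} {m n : ℕ} :
      IsLieMonomial d u m → IsLieMonomial d v n → IsLieMonomial d ⁅u, v⁆ (m + n)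

/-- Homogeneity of an element of the free Lie algebra with respect to a weighting. -/
def IsHomogeneous (d : X → ℕ) (r : FreeLieAlgebra C X) : Prop :=
  ∃ n : ℕ, r ∈ Submodule.span C {u | IsLieMonomial C d u n}

/-- The support of a sub-arrangement. -/
def arrSupp {X : Type*} (ℬ : Set (Set X)) : Set X := ⋃₀ ℬ

/-- `ℬ` is a closed sub-arrangement of `𝒜`. -/
def IsClosedSub {X : Type*} (𝒜 ℬ : Set (Set X)) : Prop :=
  ℬ ⊆ 𝒜 ∧ ∀ A ∈ 𝒜, A ∉ ℬ → (A ∩ arrSupp ℬ).Subsingleton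

/-- The relations `R_ℬ` of a sub-arrangement. -/
noncomputable def subRel (ℬ : Set (Set X)) (Rel : ∀ A : Set X, Set (FreeLieAlgebra C A)) :
    Set (FreeLieAlgebra C (arrSupp ℬ)) :=
  (⋃ B, ⋃ h : B ∈ ℬ, inclSub C (Set.subset_sUnion_of_mem h) '' Rel B) ∪
    {z | ∃ x y : arrSupp ℬ, (∀ B ∈ ℬ, ¬({(x : X), (y : X)} : Set X) ⊆ B) ∧
      z = ⁅of C x, of C y⁆}

/-- The ideal `⟨R_ℬ⟩` of `F(supp ℬ)`. -/
noncomputable def subIdeal (ℬ : Set (Set X)) (Rel : ∀ A : Set X, Set (FreeLieAlgebra C A)) :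
    LieIdeal C (FreeLieAlgebra C (arrSupp ℬ)) :=
  LieSubmodule.lieSpan C (FreeLieAlgebra C (arrSupp ℬ)) (subRel C ℬ Rel)

/-- The localized Lie algebra `L_ℬ` at a sub-arrangement. -/
noncomputable abbrev SubLie (ℬ : Set (Set X)) (Rel : ∀ A : Set X, Set (FreeLieAlgebra C A)) :=
  FreeLieAlgebra C (arrSupp ℬ) ⧸ subIdeal C ℬ Rel

/-- The quotient map `F(supp ℬ) → L_ℬ`. -/
noncomputable def subMk (ℬ : Set (Set X)) (Rel : ∀ A : Set X, Set (FreeLieAlgebra C A)) :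
    FreeLieAlgebra C (arrSupp ℬ) → SubLie C ℬ Rel :=
  LieSubmodule.Quotient.mk (N := subIdeal C ℬ Rel)

open Classical in
/-- The canonical Lie algebra map `F(X) → L_ℬ` killing the generators outside `supp ℬ`. -/
noncomputable def subProj (ℬ : Set (Set X)) (Rel : ∀ A : Set X, Set (FreeLieAlgebra C A)) :
    FreeLieAlgebra C X →ₗ⁅C⁆ SubLie C ℬ Rel :=
  FreeLieAlgebra.lift C fun x : X =>
    if h : x ∈ arrSupp ℬ then subMk C ℬ Rel (of C (⟨x, h⟩ : arrSupp ℬ)) else 0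

/-- If `L` satisfies the replacement condition, `ℬ` is a closed sub-arrangement of `𝒜`, and
there is no `A ∈ 𝒜` with `|A| = 2` and `|A ∩ supp ℬ| = 1`, then `ker π_ℬ` equals the Lie
subalgebra of `L` generated by the images of the generators in `X \ supp ℬ`. -/
theorem statement11 {C : Type*} [CommRing C] {X : Type*} [Fintype X]
    (𝒜 : Set (Set X)) (Rel : ∀ A : Set X, Set (FreeLieAlgebra C A))
    (h𝒜 : IsSetArrangement 𝒜) (hRel : AdmissibleRel C 𝒜 Rel)
    (hrep : ReplacementCond C 𝒜 Rel)
    (ℬ : Set (Set X)) (hℬ : IsClosedSub 𝒜 ℬ)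
    (hno2 : ¬∃ A ∈ 𝒜, A.ncard = 2 ∧ (A ∩ arrSupp ℬ).ncard = 1)
    (πB : ArrLie C 𝒜 Rel →ₗ⁅C⁆ SubLie C ℬ Rel)
    (hπB₁ : ∀ a : arrSupp ℬ, πB (arrMk C 𝒜 Rel (of C (a : X))) = subMk C ℬ Rel (of C a))
    (hπB₂ : ∀ x : X, x ∉ arrSupp ℬ → πB (arrMk C 𝒜 Rel (of C x)) = 0) :
    (πB.ker : Set (ArrLie C 𝒜 Rel)) =
      (LieSubalgebra.lieSpan C (ArrLie C 𝒜 Rel)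
        {z | ∃ x : X, x ∉ arrSupp ℬ ∧ z = arrMk C 𝒜 Rel (of C x)} :
          Set (ArrLie C 𝒜 Rel)) := by
  
  classical
  obtain ⟨hℬ𝒜, hclosed⟩ := hℬ
  let mkL : FreeLieAlgebra C X →ₗ⁅C⁆ ArrLie C 𝒜 Rel := quotLieHom (definingIdeal C 𝒜 Rel)
  have hmkL : ∀ u, mkL u = arrMk C 𝒜 Rel u := fun u => rfl
  have hmk0 : ∀ z ∈ definingIdeal C 𝒜 Rel, mkL z = 0 := fun z hz =>
    LieSubmodule.Quotient.mk_eq_zero'.mpr hz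
  set G : Set (ArrLie C 𝒜 Rel) :=
    {z | ∃ x : X, x ∉ arrSupp ℬ ∧ z = arrMk C 𝒜 Rel (of C x)} with hGdef
  set H : LieSubalgebra C (ArrLie C 𝒜 Rel) :=
    LieSubalgebra.lieSpan C (ArrLie C 𝒜 Rel) G with hHdef
  have hpair : ∀ x y : X, (∀ A ∈ 𝒜, ¬({x, y} : Set X) ⊆ A) →
      ⁅arrMk C 𝒜 Rel (of C x), arrMk C 𝒜 Rel (of C y)⁆ = 0 := by
    intro x y hxy
    have hmem : ⁅of C x, of C y⁆ ∈ definingIdeal C 𝒜 Rel :=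
      LieSubmodule.subset_lieSpan (Or.inl ⟨x, y, hxy, rfl⟩)
    rw [← hmkL, ← hmkL, ← mkL.map_lie]
    exact hmk0 _ hmem
  have hrelzero : ∀ A ∈ 𝒜, ∀ r ∈ Rel A, mkL (inclX C A r) = 0 := by
    intro A hA r hr
    apply hmk0
    apply LieSubmodule.subset_lieSpan
    exact Or.inr (Set.mem_biUnion hA ⟨r, hr, rfl⟩)
  -- the section θ : F(supp ℬ) → L
  let θ : FreeLieAlgebra C (arrSupp ℬ) →ₗ⁅C⁆ ArrLie C 𝒜 Rel :=
    FreeLieAlgebra.lift C fun a : arrSupp ℬ => arrMk C 𝒜 Rel (of C (a : X))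
  have hθof : ∀ a : arrSupp ℬ, θ (of C a) = arrMk C 𝒜 Rel (of C (a : X)) := fun a =>
    FreeLieAlgebra.lift_of_apply _ a
  have hθincl : ∀ (A : Set X) (hA : A ⊆ arrSupp ℬ) (r : FreeLieAlgebra C A),
      θ (inclSub C hA r) = mkL (inclX C A r) := by
    intro A hA
    have hcomp : θ.comp (inclSub C hA) = mkL.comp (inclX C A) := by
      apply FreeLieAlgebra.hom_ext
      intro b
      simp only [LieHom.comp_apply, inclSub, inclX, FreeLieAlgebra.lift_of_apply]
      exact hθof _
    intro r
    exact LieHom.congr_fun hcomp r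
  have hθker : ∀ z ∈ subIdeal C ℬ Rel, θ z = 0 := by
    intro z hz
    have hle : subIdeal C ℬ Rel ≤ θ.ker := by
      apply LieSubmodule.lieSpan_le.mpr
      rintro z (hz | ⟨x, y, hxy, rfl⟩)
      · simp only [Set.mem_iUnion] at hz
        obtain ⟨B, hB, hz⟩ := hz
        obtain ⟨r, hr, rfl⟩ := hz
        refine LieHom.mem_ker.mpr ?_
        exact (hθincl B (Set.subset_sUnion_of_mem hB) r).trans
          (hrelzero B (hℬ𝒜 hB) r hr)
      · simp only [SetLike.mem_coe, LieHom.mem_ker, LieHom.map_lie]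
        rw [hθof, hθof]
        apply hpair
        intro A hA hsub
        by_cases hAB : A ∈ ℬ
        · exact hxy A hAB hsub
        · have hss := hclosed A hA hAB
          have hx : (x : X) ∈ A ∩ arrSupp ℬ := ⟨hsub (Set.mem_insert _ _), x.2⟩
          have hy : (y : X) ∈ A ∩ arrSupp ℬ :=
            ⟨hsub (Set.mem_insert_of_mem _ rfl), y.2⟩
          have hxyeq : (x : X) = y := hss hx hy
          obtain ⟨B0, hB0, hxB0⟩ := Set.mem_sUnion.mp x.2
          apply hxy B0 hB0
          rw [← hxyeq]
          simp [Set.insert_subset_iff, hxB0]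
    exact LieHom.mem_ker.mp (hle hz)
  let σ : SubLie C ℬ Rel →ₗ⁅C⁆ ArrLie C 𝒜 Rel := quotLift _ θ hθker
  have hσmk : ∀ u, σ (subMk C ℬ Rel u) = θ u := fun u => rfl
  have hπσ : ∀ s, πB (σ s) = s := by
    have hcomp : (πB.comp σ).comp (quotLieHom (subIdeal C ℬ Rel)) =
        quotLieHom (subIdeal C ℬ Rel) := by
      apply FreeLieAlgebra.hom_ext
      intro a
      show πB (σ (subMk C ℬ Rel (of C a))) = subMk C ℬ Rel (of C a)
      rw [hσmk, hθof]
      exact hπB₁ a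
    intro s
    obtain ⟨u, rfl⟩ := LieSubmodule.Quotient.surjective_mk' (subIdeal C ℬ Rel) s
    exact LieHom.congr_fun hcomp u
  -- the key bracket lemma
  have keyLem : ∀ x : X, x ∉ arrSupp ℬ → ∀ a : X, a ∈ arrSupp ℬ →
      ⁅arrMk C 𝒜 Rel (of C x), arrMk C 𝒜 Rel (of C a)⁆ ∈ H := by
    intro x hx a ha
    by_cases hex : ∃ A ∈ 𝒜, ({x, a} : Set X) ⊆ A
    · obtain ⟨A, hA, hsub⟩ := hex
      have hxA : x ∈ A := hsub (Set.mem_insert _ _)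
      have haA : a ∈ A := hsub (Set.mem_insert_of_mem _ rfl)
      have hAB : A ∉ ℬ := fun hAB => hx (Set.mem_sUnion.mpr ⟨A, hAB, hxA⟩)
      have hAS : A ∩ arrSupp ℬ = {a} :=
        (hclosed A hA hAB).eq_singleton_of_mem ⟨haA, ha⟩
      have h2 : 2 ≤ A.ncard := h𝒜.1 A hA
      have hne2 : A.ncard ≠ 2 := by
        intro h2'
        exact hno2 ⟨A, hA, h2', by rw [hAS]; exact Set.ncard_singleton a⟩
      have h3 : 3 ≤ A.ncard := by omega
      obtain ⟨B0, hB0, haB0⟩ := Set.mem_sUnion.mp ha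
      have hBne : B0 ≠ A := fun h => hAB (h ▸ hB0)
      have hrepA := hrep A hA h3 a haA ⟨B0, hℬ𝒜 hB0, hBne, haB0⟩
      set u : LocLie C A Rel := ⁅locMk C A Rel (of C (⟨x, hxA⟩ : A)),
        locMk C A Rel (of C (⟨a, haA⟩ : A))⁆ with hu
      have hder : u ∈ LieAlgebra.derivedSeries C (LocLie C A Rel) 1 := by
        rw [show (1 : ℕ) = 0 + 1 from rfl, LieAlgebra.derivedSeries_def,
          LieAlgebra.derivedSeriesOfIdeal_succ, LieAlgebra.derivedSeriesOfIdeal_zero]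
        exact LieSubmodule.lie_mem_lie (LieSubmodule.mem_top _) (LieSubmodule.mem_top _)
      have huspan := hrepA hder
      let θA : FreeLieAlgebra C A →ₗ⁅C⁆ ArrLie C 𝒜 Rel :=
        FreeLieAlgebra.lift C fun b : A => arrMk C 𝒜 Rel (of C (b : X))
      have hθAof : ∀ b : A, θA (of C b) = arrMk C 𝒜 Rel (of C (b : X)) := fun b =>
        FreeLieAlgebra.lift_of_apply _ b
      have hθAcomp : θA = mkL.comp (inclX C A) := by
        apply FreeLieAlgebra.hom_ext
        intro b
        rw [hθAof, LieHom.comp_apply,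
          show inclX C A (of C b) = of C (b : X) from FreeLieAlgebra.lift_of_apply _ b]
        rfl
      have hθAker : ∀ z ∈ locIdeal C A Rel, θA z = 0 := by
        intro z hz
        have hle : locIdeal C A Rel ≤ θA.ker := by
          apply LieSubmodule.lieSpan_le.mpr
          intro r hr
          simp only [SetLike.mem_coe, LieHom.mem_ker]
          rw [hθAcomp, LieHom.comp_apply]
          exact hrelzero A hA r hr
        exact LieHom.mem_ker.mp (hle hz)
      let σA := quotLift (locIdeal C A Rel) θA hθAker
      have hσAmk : ∀ w, σA (locMk C A Rel w) = θA w := fun w => rfl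
      have hσAspan : LieSubalgebra.lieSpan C (LocLie C A Rel)
          {z | ∃ b : A, (b : X) ≠ a ∧ z = locMk C A Rel (of C b)} ≤ H.comap σA := by
        rw [LieSubalgebra.lieSpan_le]
        rintro _ ⟨b, hb, rfl⟩
        show σA (locMk C A Rel (of C b)) ∈ H
        rw [hσAmk, hθAof]
        have hbS : (b : X) ∉ arrSupp ℬ := by
          intro hbS
          have hmem : (b : X) ∈ A ∩ arrSupp ℬ := ⟨b.2, hbS⟩
          rw [hAS] at hmem
          exact hb hmem
        exact LieSubalgebra.subset_lieSpan ⟨(b : X), hbS, rfl⟩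
      have hmemH : σA u ∈ H := hσAspan (hrepA hder)
      have hσAu : σA u = ⁅arrMk C 𝒜 Rel (of C x), arrMk C 𝒜 Rel (of C a)⁆ := by
        rw [hu, LieHom.map_lie, hσAmk, hσAmk, hθAof, hθAof]
      rw [← hσAu]
      exact hmemH
    · rw [hpair x a (fun A hA hsub => hex ⟨A, hA, hsub⟩)]
      exact H.zero_mem
  have genLem : ∀ y : X, ∀ h ∈ H, ⁅h, arrMk C 𝒜 Rel (of C y)⁆ ∈ H := by
    intro y
    by_cases hy : y ∈ arrSupp ℬ
    · intro h hh
      have hmain : h ∈ H ∧ ⁅h, arrMk C 𝒜 Rel (of C y)⁆ ∈ H := by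
        refine lieSpan_induction_compat C
          (p := fun z => z ∈ H ∧ ⁅z, arrMk C 𝒜 Rel (of C y)⁆ ∈ H)
          (show h ∈ LieSubalgebra.lieSpan C (ArrLie C 𝒜 Rel) G from hh) ?_ ?_ ?_ ?_ ?_
        · rintro _ ⟨x, hx, rfl⟩
          exact ⟨LieSubalgebra.subset_lieSpan ⟨x, hx, rfl⟩, keyLem x hx y hy⟩
        · exact ⟨H.zero_mem, by rw [zero_lie]; exact H.zero_mem⟩
        · intro r x hx
          exact ⟨H.smul_mem r hx.1, by rw [smul_lie]; exact H.smul_mem r hx.2⟩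
        · intro x y' hx hy'
          exact ⟨H.add_mem hx.1 hy'.1, by rw [add_lie]; exact H.add_mem hx.2 hy'.2⟩
        · intro x y' hx hy'
          refine ⟨H.lie_mem hx.1 hy'.1, ?_⟩
          rw [lie_lie]
          exact sub_mem (H.lie_mem hx.1 hy'.2) (H.lie_mem hy'.1 hx.2)
      exact hmain.2
    · intro h hh
      exact H.lie_mem hh (LieSubalgebra.subset_lieSpan ⟨y, hy, rfl⟩)
  have htop : ∀ l : ArrLie C 𝒜 Rel, l ∈ LieSubalgebra.lieSpan C (ArrLie C 𝒜 Rel)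
      {z | ∃ x : X, z = arrMk C 𝒜 Rel (of C x)} := by
    intro l
    obtain ⟨w, rfl⟩ := LieSubmodule.Quotient.surjective_mk' (definingIdeal C 𝒜 Rel) l
    have h1 := freeLie_mem_lieSpan_range (C := C) w
    have h2 : LieSubalgebra.lieSpan C (FreeLieAlgebra C X) (Set.range (of C)) ≤
        (LieSubalgebra.lieSpan C (ArrLie C 𝒜 Rel)
          {z | ∃ x : X, z = arrMk C 𝒜 Rel (of C x)}).comap mkL := by
      rw [LieSubalgebra.lieSpan_le]
      rintro _ ⟨x, rfl⟩
      show mkL (of C x) ∈ LieSubalgebra.lieSpan C (ArrLie C 𝒜 Rel)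
        {z | ∃ x : X, z = arrMk C 𝒜 Rel (of C x)}
      exact LieSubalgebra.subset_lieSpan ⟨x, rfl⟩
    exact h2 h1
  have idealLem : ∀ l : ArrLie C 𝒜 Rel, ∀ h ∈ H, ⁅h, l⁆ ∈ H := by
    intro l
    refine lieSpan_induction_compat C
      (p := fun z => ∀ h ∈ H, ⁅h, z⁆ ∈ H) (htop l) ?_ ?_ ?_ ?_ ?_
    · rintro _ ⟨y, rfl⟩
      exact genLem y
    · intro h hh
      rw [lie_zero]; exact H.zero_mem
    · intro r x hx h hh
      rw [lie_smul]; exact H.smul_mem r (hx h hh)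
    · intro x y hx hy h hh
      rw [lie_add]; exact H.add_mem (hx h hh) (hy h hh)
    · intro x y hx hy h hh
      rw [leibniz_lie]
      refine H.add_mem (hy _ (hx h hh)) ?_
      rw [← lie_skew]
      exact neg_mem (hx _ (hy h hh))
  have decomp : ∀ l : ArrLie C 𝒜 Rel, ∃ h ∈ H, ∃ s, l = h + σ s := by
    intro l
    refine lieSpan_induction_compat C
      (p := fun z => ∃ h ∈ H, ∃ s, z = h + σ s) (htop l) ?_ ?_ ?_ ?_ ?_
    · rintro _ ⟨x, rfl⟩
      by_cases hx : x ∈ arrSupp ℬ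
      · refine ⟨0, H.zero_mem, subMk C ℬ Rel (of C (⟨x, hx⟩ : arrSupp ℬ)), ?_⟩
        rw [hσmk, hθof, zero_add]
      · exact ⟨arrMk C 𝒜 Rel (of C x), LieSubalgebra.subset_lieSpan ⟨x, hx, rfl⟩, 0, by
          rw [map_zero σ, add_zero]⟩
    · exact ⟨0, H.zero_mem, 0, by rw [map_zero σ, add_zero]⟩
    · rintro r x ⟨h, hh, s, rfl⟩
      exact ⟨r • h, H.smul_mem r hh, r • s, by rw [map_smul σ, smul_add]⟩
    · rintro x y ⟨h1, hh1, s1, rfl⟩ ⟨h2, hh2, s2, rfl⟩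
      exact ⟨h1 + h2, H.add_mem hh1 hh2, s1 + s2, by rw [map_add σ]; abel⟩
    · rintro x y ⟨h1, hh1, s1, rfl⟩ ⟨h2, hh2, s2, rfl⟩
      refine ⟨⁅h1, h2⁆ + ⁅h1, σ s2⁆ + ⁅σ s1, h2⁆, ?_, ⁅s1, s2⁆, ?_⟩
      · refine H.add_mem (H.add_mem (H.lie_mem hh1 hh2) (idealLem (σ s2) h1 hh1)) ?_
        rw [← lie_skew]
        exact neg_mem (idealLem (σ s1) h2 hh2)
      · simp only [add_lie, lie_add, LieHom.map_lie]
        abel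
  have hHker : ∀ h ∈ H, πB h = 0 := by
    intro h hh
    refine lieSpan_induction_compat C (p := fun z => πB z = 0)
      (show h ∈ LieSubalgebra.lieSpan C (ArrLie C 𝒜 Rel) G from hh) ?_ ?_ ?_ ?_ ?_
    · rintro _ ⟨x, hx, rfl⟩; exact hπB₂ x hx
    · exact πB.map_zero
    · intro r x hx; rw [map_smul πB, hx, smul_zero]
    · intro x y hx hy; rw [map_add πB, hx, hy, add_zero]
    · intro x y hx hy; rw [LieHom.map_lie, hx, zero_lie]
  ext l
  simp only [SetLike.mem_coe]
  constructor
  · intro hl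
    obtain ⟨h, hh, s, rfl⟩ := decomp l
    have h0 : πB (h + σ s) = 0 := LieHom.mem_ker.mp hl
    rw [map_add πB, hHker h hh, zero_add, hπσ] at h0
    rw [h0, map_zero σ, add_zero]
    exact hh
  · intro hl
    exact LieHom.mem_ker.mpr (hHker l hl)
end

section
/- Let L be a Lie algebra of a set-arrangement 𝒜 on X and let ℬ be a closed sub-arrangement of 𝒜. If [x, im(s_ℬ')] = 0 for all x ∈ X \ supp(ℬ), then [ker(π_ℬ'), im(s_ℬ')] = 0 and L' is the direct product of the ideals im(s_ℬ') and ker(π_ℬ'), i.e., L' = im(s_ℬ') ⊕ ker(π_ℬ') as a direct sum of mutually commuting Lie ideals. -/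
open FreeLieAlgebra

variable (C : Type*) [CommRing C] {X : Type*}

section Aux

variable {C}

/-- The quotient map by a Lie ideal, as a Lie algebra morphism. -/
noncomputable def qmk {L : Type*} [LieRing L] [LieAlgebra C L] (I : LieIdeal C L) :
    L →ₗ⁅C⁆ L ⧸ I :=
  { (LieSubmodule.Quotient.mk' I : L →ₗ⁅C,L⁆ L ⧸ I).toLinearMap with
    map_lie' := fun {_ _} => rfl }

@[simp] lemma qmk_apply {L : Type*} [LieRing L] [LieAlgebra C L] (I : LieIdeal C L) (x : L) :
    qmk I x = LieSubmodule.Quotient.mk (N := I) x := rfl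

lemma freeLie_gen (z : FreeLieAlgebra C X) :
    z ∈ LieSubalgebra.lieSpan C (FreeLieAlgebra C X) (Set.range (of C)) := by
  set K := LieSubalgebra.lieSpan C (FreeLieAlgebra C X) (Set.range (of C)) with hK
  let g : FreeLieAlgebra C X →ₗ⁅C⁆ K :=
    FreeLieAlgebra.lift C fun x => ⟨of C x, LieSubalgebra.subset_lieSpan ⟨x, rfl⟩⟩
  have h : K.incl.comp g = LieHom.id := by
    apply FreeLieAlgebra.hom_ext
    intro x
    simp [g, FreeLieAlgebra.lift_of_apply]
  have h2 : ((g z : K) : FreeLieAlgebra C X) = z := LieHom.congr_fun h z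
  rw [← h2]
  exact (g z).2

lemma quot_gen (I : LieIdeal C (FreeLieAlgebra C X))
    (K : LieSubalgebra C (FreeLieAlgebra C X ⧸ I))
    (hK : ∀ x : X, qmk I (of C x) ∈ K) (z : FreeLieAlgebra C X ⧸ I) : z ∈ K := by
  obtain ⟨w, rfl⟩ := Submodule.Quotient.mk_surjective (I : Submodule C (FreeLieAlgebra C X)) z
  have hle : LieSubalgebra.lieSpan C (FreeLieAlgebra C X) (Set.range (of C)) ≤
      K.comap (qmk I) := by
    rw [LieSubalgebra.lieSpan_le]
    rintro _ ⟨x, rfl⟩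
    exact hK x
  exact hle (freeLie_gen w)

end Aux

/-- If `[x, im(s_ℬ')] = 0` for all `x ∈ X \ supp ℬ`, then `[ker(π_ℬ'), im(s_ℬ')] = 0` and
`L'` is the direct product of the ideals `im(s_ℬ')` and `ker(π_ℬ')`: every element of `L'`
decomposes as a sum, the intersection is trivial, and both are mutually commuting Lie ideals
of `L'`. -/
theorem statement12 {C : Type*} [CommRing C] {X : Type*} [Fintype X]
    (𝒜 : Set (Set X)) (Rel : ∀ A : Set X, Set (FreeLieAlgebra C A))
    (h𝒜 : IsSetArrangement 𝒜) (hRel : AdmissibleRel C 𝒜 Rel)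
    (ℬ : Set (Set X)) (hℬ : IsClosedSub 𝒜 ℬ)
    (sB : SubLie C ℬ Rel →ₗ⁅C⁆ ArrLie C 𝒜 Rel)
    (hsB : ∀ a : arrSupp ℬ, sB (subMk C ℬ Rel (of C a)) = arrMk C 𝒜 Rel (of C (a : X)))
    (πB : ArrLie C 𝒜 Rel →ₗ⁅C⁆ SubLie C ℬ Rel)
    (hπB₁ : ∀ a : arrSupp ℬ, πB (arrMk C 𝒜 Rel (of C (a : X))) = subMk C ℬ Rel (of C a))
    (hπB₂ : ∀ x : X, x ∉ arrSupp ℬ → πB (arrMk C 𝒜 Rel (of C x)) = 0)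
    (hcomm : ∀ x : X, x ∉ arrSupp ℬ →
      ∀ r ∈ sB '' (LieAlgebra.derivedSeries C (SubLie C ℬ Rel) 1 : Set (SubLie C ℬ Rel)),
        ⁅arrMk C 𝒜 Rel (of C x), r⁆ = 0) :
    -- `[ker(π_ℬ'), im(s_ℬ')] = 0`
    (∀ u ∈ LieAlgebra.derivedSeries C (ArrLie C 𝒜 Rel) 1, πB u = 0 →
      ∀ r ∈ sB '' (LieAlgebra.derivedSeries C (SubLie C ℬ Rel) 1 : Set (SubLie C ℬ Rel)),
        ⁅u, r⁆ = 0) ∧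
    -- `L' = im(s_ℬ') + ker(π_ℬ')`
    (∀ w ∈ LieAlgebra.derivedSeries C (ArrLie C 𝒜 Rel) 1,
      ∃ r ∈ sB '' (LieAlgebra.derivedSeries C (SubLie C ℬ Rel) 1 : Set (SubLie C ℬ Rel)),
        ∃ u ∈ LieAlgebra.derivedSeries C (ArrLie C 𝒜 Rel) 1, πB u = 0 ∧ w = r + u) ∧
    -- `im(s_ℬ') ∩ ker(π_ℬ') = 0`
    (∀ w ∈ sB '' (LieAlgebra.derivedSeries C (SubLie C ℬ Rel) 1 : Set (SubLie C ℬ Rel)),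
      w ∈ LieAlgebra.derivedSeries C (ArrLie C 𝒜 Rel) 1 → πB w = 0 → w = 0) ∧
    -- `im(s_ℬ')` is a Lie ideal of `L'`
    (∀ w ∈ LieAlgebra.derivedSeries C (ArrLie C 𝒜 Rel) 1,
      ∀ r ∈ sB '' (LieAlgebra.derivedSeries C (SubLie C ℬ Rel) 1 : Set (SubLie C ℬ Rel)),
        ⁅w, r⁆ ∈ sB '' (LieAlgebra.derivedSeries C (SubLie C ℬ Rel) 1 : Set (SubLie C ℬ Rel))) ∧
    -- `ker(π_ℬ')` is a Lie ideal of `L'`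
    (∀ w ∈ LieAlgebra.derivedSeries C (ArrLie C 𝒜 Rel) 1,
      ∀ u ∈ LieAlgebra.derivedSeries C (ArrLie C 𝒜 Rel) 1, πB u = 0 →
        ⁅w, u⁆ ∈ LieAlgebra.derivedSeries C (ArrLie C 𝒜 Rel) 1 ∧ πB ⁅w, u⁆ = 0) := by
  classical
  set DS : LieIdeal C (SubLie C ℬ Rel) := LieAlgebra.derivedSeries C (SubLie C ℬ Rel) 1 with hDS
  set DL : LieIdeal C (ArrLie C 𝒜 Rel) :=
    LieAlgebra.derivedSeries C (ArrLie C 𝒜 Rel) 1 with hDL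
  -- `π ∘ s = id`
  have hπs : ∀ z : SubLie C ℬ Rel, πB (sB z) = z := by
    intro z
    obtain ⟨w, rfl⟩ :=
      Submodule.Quotient.mk_surjective ((subIdeal C ℬ Rel : LieIdeal C _) :
        Submodule C (FreeLieAlgebra C (arrSupp ℬ))) z
    have h : (πB.comp sB).comp (qmk (subIdeal C ℬ Rel)) = qmk (subIdeal C ℬ Rel) := by
      apply FreeLieAlgebra.hom_ext
      intro a
      simp only [LieHom.comp_apply, qmk_apply]
      have h1 : sB (subMk C ℬ Rel (of C a)) = arrMk C 𝒜 Rel (of C (a : X)) := hsB a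
      show πB (sB (subMk C ℬ Rel (of C a))) = subMk C ℬ Rel (of C a)
      rw [h1, hπB₁ a]
    exact LieHom.congr_fun h w
  -- `s` maps the derived series into the derived series
  have hsDS : ∀ r' ∈ DS, sB r' ∈ DL := fun r' hr' =>
    LieIdeal.derivedSeries_map_le 1 (LieIdeal.mem_map hr')
  -- `π` maps the derived series into the derived series
  have hπDS : ∀ w ∈ DL, πB w ∈ DS := fun w hw =>
    LieIdeal.derivedSeries_map_le 1 (LieIdeal.mem_map hw)
  -- the key claim: `⁅z, s r'⁆ = s ⁅π z, r'⁆` for every `z : L`, `r' ∈ DS`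
  have key : ∀ z : ArrLie C 𝒜 Rel, ∀ r' ∈ DS, ⁅z, sB r'⁆ = sB ⁅πB z, r'⁆ := by
    let K : LieSubalgebra C (ArrLie C 𝒜 Rel) :=
      { carrier := {z | ∀ r' ∈ DS, ⁅z, sB r'⁆ = sB ⁅πB z, r'⁆}
        add_mem' := by
          intro a b ha hb r' hr'
          simp only [Set.mem_setOf_eq] at ha hb ⊢
          rw [add_lie, ha r' hr', hb r' hr', map_add πB, add_lie, map_add sB]
        zero_mem' := by
          intro r' hr'
          show ⁅(0 : ArrLie C 𝒜 Rel), sB r'⁆ = sB ⁅πB 0, r'⁆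
          rw [zero_lie, map_zero πB, zero_lie, map_zero sB]
        smul_mem' := by
          intro c a ha r' hr'
          simp only [Set.mem_setOf_eq] at ha ⊢
          rw [smul_lie, ha r' hr', map_smul πB, smul_lie, map_smul sB]
        lie_mem' := by
          intro a b ha hb r' hr'
          simp only [Set.mem_setOf_eq] at ha hb ⊢
          have hb' : ⁅πB b, r'⁆ ∈ DS := DS.lie_mem hr'
          have ha' : ⁅πB a, r'⁆ ∈ DS := DS.lie_mem hr'
          rw [lie_lie, hb r' hr', ha r' hr', ha _ hb', hb _ ha', ← map_sub sB]
          congr 1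
          rw [πB.map_lie, lie_lie] }
    intro z
    refine quot_gen (definingIdeal C 𝒜 Rel) K ?_ z
    intro x
    by_cases hx : x ∈ arrSupp ℬ
    · intro r' hr'
      simp only [qmk_apply]
      have h1 : (arrMk C 𝒜 Rel (of C x) : ArrLie C 𝒜 Rel) =
          sB (subMk C ℬ Rel (of C (⟨x, hx⟩ : arrSupp ℬ))) := (hsB ⟨x, hx⟩).symm
      show ⁅arrMk C 𝒜 Rel (of C x), sB r'⁆ = sB ⁅πB (arrMk C 𝒜 Rel (of C x)), r'⁆
      rw [h1, ← LieHom.map_lie sB, hπs]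
    · intro r' hr'
      simp only [qmk_apply]
      show ⁅arrMk C 𝒜 Rel (of C x), sB r'⁆ = sB ⁅πB (arrMk C 𝒜 Rel (of C x)), r'⁆
      rw [hcomm x hx (sB r') ⟨r', hr', rfl⟩, hπB₂ x hx, zero_lie, map_zero sB]
  refine ⟨?_, ?_, ?_, ?_, ?_⟩
  · -- part 1
    rintro u _ hu _ ⟨r', hr', rfl⟩
    rw [key u r' hr', hu, zero_lie, map_zero sB]
  · -- part 2
    intro w hw
    have hπw : πB w ∈ DS := hπDS w hw
    refine ⟨sB (πB w), ⟨πB w, hπw, rfl⟩, w - sB (πB w), ?_, ?_, by abel⟩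
    · exact DL.sub_mem hw (hsDS _ hπw)
    · rw [map_sub πB, hπs, sub_self]
  · -- part 3
    rintro _ ⟨r', hr', rfl⟩ _ hker
    rw [hπs] at hker
    rw [hker, map_zero sB]
  · -- part 4
    rintro w hw _ ⟨r', hr', rfl⟩
    exact ⟨⁅πB w, r'⁆, DS.lie_mem hr', (key w r' hr').symm⟩
  · -- part 5
    intro w _ u hu hker
    refine ⟨DL.lie_mem hu, ?_⟩
    rw [LieHom.map_lie, hker, lie_zero]
end

section
/- Let L be a Lie algebra of a set-arrangement 𝒜 on X and let ℬ_i and ℬ_j be disjoint closed sub-arrangements of 𝒜. If x, y ∈ supp(ℬ_i) ∩ supp(ℬ_j), then [x,y] = 0 in L. -/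
open FreeLieAlgebra

variable (C : Type*) [CommRing C] {X : Type*}

/-- If `ℬ₁` and `ℬ₂` are disjoint closed sub-arrangements of `𝒜` and
`x, y ∈ supp ℬ₁ ∩ supp ℬ₂`, then `⁅x, y⁆ = 0` in `L`. -/
theorem statement13 {C : Type*} [CommRing C] {X : Type*} [Fintype X]
    (𝒜 : Set (Set X)) (Rel : ∀ A : Set X, Set (FreeLieAlgebra C A))
    (h𝒜 : IsSetArrangement 𝒜) (hRel : AdmissibleRel C 𝒜 Rel)
    (ℬ₁ ℬ₂ : Set (Set X)) (h₁ : IsClosedSub 𝒜 ℬ₁) (h₂ : IsClosedSub 𝒜 ℬ₂)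
    (hdisj : ℬ₁ ∩ ℬ₂ = ∅)
    (x y : X) (hx : x ∈ arrSupp ℬ₁ ∩ arrSupp ℬ₂) (hy : y ∈ arrSupp ℬ₁ ∩ arrSupp ℬ₂) :
    ⁅arrMk C 𝒜 Rel (of C x), arrMk C 𝒜 Rel (of C y)⁆ = 0 := by
  by_cases hxy : x = y
  · subst hxy; simp
  · have hmem : ⁅of C x, of C y⁆ ∈ definingIdeal C 𝒜 Rel := by
      apply LieSubmodule.subset_lieSpan
      left
      refine ⟨x, y, ?_, rfl⟩
      intro A hA hsub
      have hxA : x ∈ A := hsub (by simp)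
      have hyA : y ∈ A := hsub (by simp)
      have hA1 : A ∈ ℬ₁ := by
        by_contra h
        exact hxy (h₁.2 A hA h ⟨hxA, hx.1⟩ ⟨hyA, hy.1⟩)
      have hA2 : A ∈ ℬ₂ := by
        by_contra h
        exact hxy (h₂.2 A hA h ⟨hxA, hx.2⟩ ⟨hyA, hy.2⟩)
      have : A ∈ ℬ₁ ∩ ℬ₂ := ⟨hA1, hA2⟩
      rw [hdisj] at this
      exact this
    have h0 : arrMk C 𝒜 Rel ⁅of C x, of C y⁆ = 0 :=
      (LieSubmodule.Quotient.mk_eq_zero _).mpr hmem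
    rw [← h0]
    rfl
end

section
/- Let ℬ_1,…,ℬ_k be pairwise disjoint closed sub-arrangements of a set-arrangement 𝒜 on X with ⋃_i ℬ_i = 𝒜, and let L be a Lie algebra of 𝒜. The following conditions are equivalent: 1) [x, im(s_{ℬ_i}')] = 0 for all i = 1,…,k and all x ∈ X \ supp(ℬ_i); 2) im(s_{ℬ_i}') is an ideal in L for all i; 3) L' = Σ_{i=1}^k im(s_{ℬ_i}'); 4) s' is surjective; 5) π' is injective. -/
open FreeLieAlgebra

variable (C : Type*) [CommRing C] {X : Type*}

section Helpers
variable {R : Type*} [CommRing R] {L M : Type*} [LieRing L] [LieAlgebra R L]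
  [LieRing M] [LieAlgebra R M]

/-- The quotient map by a Lie ideal, as a morphism of Lie algebras. -/
noncomputable def mkLieHom (I : LieIdeal R L) : L →ₗ⁅R⁆ L ⧸ I :=
  { (I : LieSubmodule R L L).toSubmodule.mkQ with
    toFun := LieSubmodule.Quotient.mk (N := I)
    map_lie' := rfl }

@[simp] lemma mkLieHom_apply (I : LieIdeal R L) (x : L) :
    mkLieHom (R := R) I x = LieSubmodule.Quotient.mk (N := I) x := rfl

lemma lie_mem_derived (x y : L) : ⁅x, y⁆ ∈ LieAlgebra.derivedSeries R L 1 := by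
  show ⁅x, y⁆ ∈ LieAlgebra.derivedSeriesOfIdeal R L 1 ⊤
  rw [show (1 : ℕ) = 0 + 1 from rfl, LieAlgebra.derivedSeriesOfIdeal_succ,
    LieAlgebra.derivedSeriesOfIdeal_zero]
  exact LieSubmodule.lie_mem_lie (LieSubmodule.mem_top x) (LieSubmodule.mem_top y)

lemma derived_induction {P : L → Prop} (h0 : P 0)
    (hadd : ∀ u v, P u → P v → P (u + v)) (hsmul : ∀ (c : R) u, P u → P (c • u))
    (hlie : ∀ u v : L, P ⁅u, v⁆) :
    ∀ z ∈ LieAlgebra.derivedSeries R L 1, P z := by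
  intro z hz
  have h1 : LieAlgebra.derivedSeries R L 1 = ⁅(⊤ : LieIdeal R L), (⊤ : LieIdeal R L)⁆ := by
    show LieAlgebra.derivedSeriesOfIdeal R L 1 ⊤ = _
    rw [show (1 : ℕ) = 0 + 1 from rfl, LieAlgebra.derivedSeriesOfIdeal_succ,
      LieAlgebra.derivedSeriesOfIdeal_zero]
  rw [h1, ← LieSubmodule.mem_toSubmodule, LieSubmodule.lieIdeal_oper_eq_linear_span] at hz
  refine Submodule.span_induction ?_ h0 (fun u v _ _ => hadd u v) (fun c u _ => hsmul c u) hz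
  rintro m ⟨x, n, rfl⟩
  exact hlie _ _

lemma hom_derived (f : L →ₗ⁅R⁆ M) :
    ∀ z ∈ LieAlgebra.derivedSeries R L 1, f z ∈ LieAlgebra.derivedSeries R M 1 := by
  refine derived_induction (by simp) (fun u v hu hv => by rw [map_add f]; exact add_mem hu hv)
    (fun c u hu => by rw [map_smul f]; exact Submodule.smul_mem _ _ hu) (fun u v => ?_)
  rw [LieHom.map_lie]
  exact lie_mem_derived _ _

end Helpers

section FreeQuot
variable {R : Type*} [CommRing R] {Y : Type*}
open FreeLieAlgebra

theorem quotFree_induction (I : LieIdeal R (FreeLieAlgebra R Y))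
    {P : (FreeLieAlgebra R Y ⧸ I) → Prop}
    (hgen : ∀ y : Y, P (LieSubmodule.Quotient.mk (N := I) (of R y)))
    (h0 : P 0)
    (hadd : ∀ u v, P u → P v → P (u + v))
    (hsmul : ∀ (c : R) u, P u → P (c • u))
    (hlie : ∀ u v, P u → P v → P ⁅u, v⁆) :
    ∀ u, P u := by
  let K : LieSubalgebra R (FreeLieAlgebra R Y ⧸ I) :=
    { carrier := {u | P u}
      add_mem' := fun {u v} hu hv => hadd u v hu hv
      zero_mem' := h0
      smul_mem' := fun c u hu => hsmul c u hu
      lie_mem' := fun {u v} hu hv => hlie u v hu hv }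
  let f : FreeLieAlgebra R Y →ₗ⁅R⁆ K := lift R fun y => ⟨_, hgen y⟩
  have key : K.incl.comp f = mkLieHom I := by
    apply FreeLieAlgebra.hom_ext
    intro y
    simp [f, lift_of_apply]
  intro u
  obtain ⟨w, rfl⟩ := LieSubmodule.Quotient.surjective_mk' I u
  have : K.incl (f w) = LieSubmodule.Quotient.mk (N := I) w := by
    have := congrArg (fun g => g w) key; exact this
  rw [show (LieSubmodule.Quotient.mk' I w : FreeLieAlgebra R Y ⧸ I)
      = LieSubmodule.Quotient.mk (N := I) w from rfl, ← this]
  exact (f w).2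

theorem quotFree_hom_ext (I : LieIdeal R (FreeLieAlgebra R Y)) {M : Type*}
    [LieRing M] [LieAlgebra R M] {f g : (FreeLieAlgebra R Y ⧸ I) →ₗ⁅R⁆ M}
    (h : ∀ y : Y, f (LieSubmodule.Quotient.mk (N := I) (of R y))
      = g (LieSubmodule.Quotient.mk (N := I) (of R y))) : ∀ u, f u = g u := by
  refine quotFree_induction I h (by simp) (fun u v hu hv => by simp [hu, hv])
    (fun c u hu => by simp [hu]) (fun u v hu hv => by simp [hu, hv])

end FreeQuot

/-- Theorem 3.8 (`\ref{sub}`): for pairwise disjoint closed sub-arrangements `ℬ₁, …, ℬ_k`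
covering `𝒜`, the following are equivalent:
1) `[x, im(s_{ℬ_i}')] = 0` for all `i` and `x ∈ X \ supp ℬ_i`;
2) `im(s_{ℬ_i}')` is an ideal in `L` for all `i`;
3) `L' = Σ_i im(s_{ℬ_i}')`;
4) `s'` is surjective;
5) `π'` is injective. -/
theorem statement15 {C : Type*} [CommRing C] {X : Type*} [Fintype X]
    (𝒜 : Set (Set X)) (Rel : ∀ A : Set X, Set (FreeLieAlgebra C A))
    (h𝒜 : IsSetArrangement 𝒜) (hRel : AdmissibleRel C 𝒜 Rel)
    (k : ℕ) (ℬ : Fin k → Set (Set X))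
    (hclosed : ∀ i, IsClosedSub 𝒜 (ℬ i))
    (hdisj : ∀ i j, i ≠ j → ℬ i ∩ ℬ j = ∅)
    (hcover : ⋃ i, ℬ i = 𝒜)
    (s : ∀ i, SubLie C (ℬ i) Rel →ₗ⁅C⁆ ArrLie C 𝒜 Rel)
    (hs : ∀ i, ∀ a : arrSupp (ℬ i),
      s i (subMk C (ℬ i) Rel (of C a)) = arrMk C 𝒜 Rel (of C (a : X)))
    (π : ∀ i, ArrLie C 𝒜 Rel →ₗ⁅C⁆ SubLie C (ℬ i) Rel)
    (hπ₁ : ∀ i, ∀ a : arrSupp (ℬ i),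
      π i (arrMk C 𝒜 Rel (of C (a : X))) = subMk C (ℬ i) Rel (of C a))
    (hπ₂ : ∀ i, ∀ x : X, x ∉ arrSupp (ℬ i) → π i (arrMk C 𝒜 Rel (of C x)) = 0) :
    List.TFAE [
      -- 1) `[x, im(s_{ℬ_i}')] = 0` for `x ∉ supp ℬ_i`
      ∀ i, ∀ x : X, x ∉ arrSupp (ℬ i) →
        ∀ r ∈ s i ''
          (LieAlgebra.derivedSeries C (SubLie C (ℬ i) Rel) 1 : Set (SubLie C (ℬ i) Rel)),
          ⁅arrMk C 𝒜 Rel (of C x), r⁆ = 0,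
      -- 2) `im(s_{ℬ_i}')` is an ideal in `L`
      ∀ i, ∀ u : ArrLie C 𝒜 Rel,
        ∀ r ∈ s i ''
          (LieAlgebra.derivedSeries C (SubLie C (ℬ i) Rel) 1 : Set (SubLie C (ℬ i) Rel)),
          ⁅u, r⁆ ∈ s i ''
            (LieAlgebra.derivedSeries C (SubLie C (ℬ i) Rel) 1 : Set (SubLie C (ℬ i) Rel)),
      -- 3) `L' = Σ_i im(s_{ℬ_i}')`
      LieSubmodule.toSubmodule (LieAlgebra.derivedSeries C (ArrLie C 𝒜 Rel) 1) =
        ⨆ i, Submodule.map (s i).toLinearMap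
          (LieSubmodule.toSubmodule (LieAlgebra.derivedSeries C (SubLie C (ℬ i) Rel) 1)),
      -- 4) `s'` is surjective
      ∀ u ∈ LieAlgebra.derivedSeries C (ArrLie C 𝒜 Rel) 1,
        ∃ z : ∀ i, SubLie C (ℬ i) Rel,
          (∀ i, z i ∈ LieAlgebra.derivedSeries C (SubLie C (ℬ i) Rel) 1) ∧
          u = ∑ i, s i (z i),
      -- 5) `π'` is injective
      ∀ u ∈ LieAlgebra.derivedSeries C (ArrLie C 𝒜 Rel) 1,
        ∀ v ∈ LieAlgebra.derivedSeries C (ArrLie C 𝒜 Rel) 1,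
          (∀ i, π i u = π i v) → u = v] := by
  classical
  -- the bracket of two generators not contained in a common member of 𝒜 vanishes in L
  have harr_pair : ∀ x y : X, (∀ A ∈ 𝒜, ¬({x, y} : Set X) ⊆ A) →
      ⁅arrMk C 𝒜 Rel (of C x), arrMk C 𝒜 Rel (of C y)⁆ = 0 := by
    intro x y hxy
    show LieSubmodule.Quotient.mk' (definingIdeal C 𝒜 Rel) ⁅of C x, of C y⁆ = 0
    rw [LieSubmodule.Quotient.mk_eq_zero]
    exact LieSubmodule.subset_lieSpan (Set.mem_union_left _ ⟨x, y, hxy, rfl⟩)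
  -- same in a localized Lie algebra
  have hsub_pair : ∀ i, ∀ a b : ↥(arrSupp (ℬ i)),
      (∀ B ∈ ℬ i, ¬({(a : X), (b : X)} : Set X) ⊆ B) →
      ⁅subMk C (ℬ i) Rel (of C a), subMk C (ℬ i) Rel (of C b)⁆ = 0 := by
    intro i a b hab
    show LieSubmodule.Quotient.mk' (subIdeal C (ℬ i) Rel) ⁅of C a, of C b⁆ = 0
    rw [LieSubmodule.Quotient.mk_eq_zero]
    exact LieSubmodule.subset_lieSpan (Set.mem_union_right _ ⟨a, b, hab, rfl⟩)
  -- combinatorial key fact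
  have hcomb : ∀ i j, i ≠ j → ∀ a b : X, a ∈ arrSupp (ℬ i) → b ∈ arrSupp (ℬ i) →
      a ≠ b → ∀ B ∈ ℬ j, ¬({a, b} : Set X) ⊆ B := by
    intro i j hij a b ha hb hab B hBj hsub
    have hB𝒜 : B ∈ 𝒜 := (hclosed j).1 hBj
    have hBi : B ∉ ℬ i := fun hBi =>
      (Set.eq_empty_iff_forall_notMem.mp (hdisj i j hij)) B ⟨hBi, hBj⟩
    exact hab (((hclosed i).2 B hB𝒜 hBi)
      ⟨hsub (Set.mem_insert _ _), ha⟩ ⟨hsub (Set.mem_insert_iff.mpr (Or.inr rfl)), hb⟩)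
  -- retraction
  have hret : ∀ i, ∀ z, π i (s i z) = z := by
    intro i z
    exact quotFree_hom_ext (subIdeal C (ℬ i) Rel)
      (f := (π i).comp (s i)) (g := LieHom.id) (fun a => by
        show π i (s i (subMk C (ℬ i) Rel (of C a))) = subMk C (ℬ i) Rel (of C a)
        rw [hs i a, hπ₁ i a]) z
  -- π j ∘ s i kills the derived subalgebra for i ≠ j
  have habel : ∀ i j, i ≠ j → ∀ z ∈ LieAlgebra.derivedSeries C (SubLie C (ℬ i) Rel) 1,
      π j (s i z) = 0 := by
    intro i j hij
    have hgg : ∀ a b : ↥(arrSupp (ℬ i)),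
        ⁅π j (s i (subMk C (ℬ i) Rel (of C a))),
          π j (s i (subMk C (ℬ i) Rel (of C b)))⁆ = 0 := by
      intro a b
      rw [hs i a, hs i b]
      by_cases haj : (a : X) ∈ arrSupp (ℬ j)
      · by_cases hbj : (b : X) ∈ arrSupp (ℬ j)
        · have ea : π j (arrMk C 𝒜 Rel (of C (a : X)))
              = subMk C (ℬ j) Rel (of C ⟨(a : X), haj⟩) := hπ₁ j ⟨(a : X), haj⟩
          have eb : π j (arrMk C 𝒜 Rel (of C (b : X)))
              = subMk C (ℬ j) Rel (of C ⟨(b : X), hbj⟩) := hπ₁ j ⟨(b : X), hbj⟩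
          rw [ea, eb]
          by_cases hab : (a : X) = (b : X)
          · have : (⟨(a : X), haj⟩ : ↥(arrSupp (ℬ j))) = ⟨(b : X), hbj⟩ := Subtype.ext hab
            rw [this]; exact lie_self _
          · exact hsub_pair j ⟨(a : X), haj⟩ ⟨(b : X), hbj⟩
              (hcomb i j hij (a : X) (b : X) a.2 b.2 hab)
        · rw [hπ₂ j _ hbj, lie_zero]
      · rw [hπ₂ j _ haj, zero_lie]
    have hc1 : ∀ a : ↥(arrSupp (ℬ i)), ∀ v,
        ⁅π j (s i (subMk C (ℬ i) Rel (of C a))), π j (s i v)⁆ = 0 := by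
      intro a
      refine quotFree_induction (subIdeal C (ℬ i) Rel)
        (P := fun v => ⁅π j (s i (subMk C (ℬ i) Rel (of C a))), π j (s i v)⁆ = 0)
        (fun b => hgg a b) ?_ ?_ ?_ ?_
      all_goals try dsimp only
      · rw [map_zero (s i), map_zero (π j), lie_zero]
      · intro u v hu hv; rw [map_add (s i), map_add (π j), lie_add, hu, hv, add_zero]
      · intro c u hu; rw [map_smul (s i), map_smul (π j), lie_smul, hu, smul_zero]
      · intro u v hu hv
        rw [(s i).map_lie, (π j).map_lie, leibniz_lie, hu, hv, zero_lie, lie_zero, add_zero]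
    have hc2 : ∀ u v, ⁅π j (s i u), π j (s i v)⁆ = 0 := by
      refine quotFree_induction (subIdeal C (ℬ i) Rel)
        (P := fun u => ∀ v, ⁅π j (s i u), π j (s i v)⁆ = 0) hc1 ?_ ?_ ?_ ?_
      all_goals try dsimp only
      · intro v; rw [map_zero (s i), map_zero (π j), zero_lie]
      · intro u u' hu hu' v; rw [map_add (s i), map_add (π j), add_lie, hu v, hu' v, add_zero]
      · intro c u hu v; rw [map_smul (s i), map_smul (π j), smul_lie, hu v, smul_zero]
      · intro u u' hu hu' v
        rw [(s i).map_lie, (π j).map_lie, lie_lie, hu' v, hu v, lie_zero, lie_zero, sub_zero]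
    refine derived_induction ?_ ?_ ?_ ?_
    all_goals try dsimp only
    · rw [map_zero (s i), map_zero (π j)]
    · intro u v hu hv; rw [map_add (s i), map_add (π j), hu, hv, add_zero]
    · intro c u hu; rw [map_smul (s i), map_smul (π j), hu, smul_zero]
    · intro u v; rw [(s i).map_lie, (π j).map_lie]; exact hc2 u v
  tfae_have 1 → 2 := by
    intro h1 i u r hr
    obtain ⟨z, hz, rfl⟩ := hr
    have main : ∀ u : ArrLie C 𝒜 Rel,
        ∀ z ∈ LieAlgebra.derivedSeries C (SubLie C (ℬ i) Rel) 1,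
        ∃ w ∈ LieAlgebra.derivedSeries C (SubLie C (ℬ i) Rel) 1,
          ⁅u, s i z⁆ = s i w := by
      refine quotFree_induction (definingIdeal C 𝒜 Rel)
        (P := fun u => ∀ z ∈ LieAlgebra.derivedSeries C (SubLie C (ℬ i) Rel) 1,
          ∃ w ∈ LieAlgebra.derivedSeries C (SubLie C (ℬ i) Rel) 1, ⁅u, s i z⁆ = s i w)
        ?_ ?_ ?_ ?_ ?_
      all_goals try dsimp only
      · intro x z hz
        by_cases hx : x ∈ arrSupp (ℬ i)
        · refine ⟨⁅subMk C (ℬ i) Rel (of C ⟨x, hx⟩), z⁆,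
            (LieAlgebra.derivedSeries C (SubLie C (ℬ i) Rel) 1).lie_mem hz, ?_⟩
          have ex : arrMk C 𝒜 Rel (of C x)
              = s i (subMk C (ℬ i) Rel (of C ⟨x, hx⟩)) := (hs i ⟨x, hx⟩).symm
          show ⁅arrMk C 𝒜 Rel (of C x), s i z⁆ = _
          rw [ex, ← (s i).map_lie]
        · refine ⟨0, zero_mem _, ?_⟩
          rw [map_zero (s i)]
          exact h1 i x hx (s i z) ⟨z, hz, rfl⟩
      · intro z hz; exact ⟨0, zero_mem _, by rw [zero_lie, map_zero (s i)]⟩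
      · intro u v hu hv z hz
        obtain ⟨w1, hw1, e1⟩ := hu z hz
        obtain ⟨w2, hw2, e2⟩ := hv z hz
        exact ⟨w1 + w2, add_mem hw1 hw2, by rw [add_lie, e1, e2, map_add (s i)]⟩
      · intro c u hu z hz
        obtain ⟨w, hw, e⟩ := hu z hz
        exact ⟨c • w, Submodule.smul_mem _ _ hw, by rw [smul_lie, e, map_smul (s i)]⟩
      · intro u v hu hv z hz
        obtain ⟨w1, hw1, e1⟩ := hv z hz
        obtain ⟨w2, hw2, e2⟩ := hu w1 hw1
        obtain ⟨w3, hw3, e3⟩ := hu z hz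
        obtain ⟨w4, hw4, e4⟩ := hv w3 hw3
        exact ⟨w2 - w4, sub_mem hw2 hw4, by rw [lie_lie, e1, e3, e2, e4, map_sub (s i)]⟩
    obtain ⟨w, hw, e⟩ := main u z hz
    exact ⟨w, hw, e.symm⟩
  tfae_have 2 → 3 := by
    intro h2
    set M : Submodule C (ArrLie C 𝒜 Rel) := ⨆ i, Submodule.map (s i).toLinearMap
      (LieSubmodule.toSubmodule (LieAlgebra.derivedSeries C (SubLie C (ℬ i) Rel) 1)) with hM
    have hMi : ∀ i, ∀ z ∈ LieAlgebra.derivedSeries C (SubLie C (ℬ i) Rel) 1,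
        s i z ∈ M := fun i z hz => Submodule.mem_iSup_of_mem i ⟨z, hz, rfl⟩
    have hMideal : ∀ u : ArrLie C 𝒜 Rel, ∀ m ∈ M, ⁅u, m⁆ ∈ M := by
      intro u m hm
      refine Submodule.iSup_induction _ (motive := fun m => ⁅u, m⁆ ∈ M) hm ?_ ?_ ?_
      · rintro i m ⟨z, hz, rfl⟩
        obtain ⟨w, hw, he⟩ := h2 i u (s i z) ⟨z, hz, rfl⟩
        show ⁅u, s i z⁆ ∈ M
        rw [← he]
        exact hMi i w hw
      · rw [lie_zero]; exact zero_mem M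
      · intro a b ha hb; rw [lie_add]; exact add_mem ha hb
    have hgenlie : ∀ x y : X,
        ⁅arrMk C 𝒜 Rel (of C x), arrMk C 𝒜 Rel (of C y)⁆ ∈ M := by
      intro x y
      by_cases hA : ∃ A ∈ 𝒜, ({x, y} : Set X) ⊆ A
      · obtain ⟨A, hA𝒜, hsub⟩ := hA
        rw [← hcover] at hA𝒜
        obtain ⟨i, hAi⟩ := Set.mem_iUnion.mp hA𝒜
        have hx : x ∈ arrSupp (ℬ i) := ⟨A, hAi, hsub (Set.mem_insert _ _)⟩
        have hy : y ∈ arrSupp (ℬ i) := ⟨A, hAi, hsub (Set.mem_insert_iff.mpr (Or.inr rfl))⟩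
        have ex : arrMk C 𝒜 Rel (of C x)
            = s i (subMk C (ℬ i) Rel (of C ⟨x, hx⟩)) := (hs i ⟨x, hx⟩).symm
        have ey : arrMk C 𝒜 Rel (of C y)
            = s i (subMk C (ℬ i) Rel (of C ⟨y, hy⟩)) := (hs i ⟨y, hy⟩).symm
        rw [ex, ey, ← (s i).map_lie]
        exact hMi i _ (lie_mem_derived _ _)
      · push_neg at hA
        rw [harr_pair x y hA]
        exact zero_mem M
    have hlie2 : ∀ u v : ArrLie C 𝒜 Rel, ⁅u, v⁆ ∈ M := by
      have step1 : ∀ x : X, ∀ v, ⁅arrMk C 𝒜 Rel (of C x), v⁆ ∈ M := by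
        intro x
        refine quotFree_induction (definingIdeal C 𝒜 Rel)
          (P := fun v => ⁅arrMk C 𝒜 Rel (of C x), v⁆ ∈ M)
          (fun y => hgenlie x y) ?_ ?_ ?_ ?_
        all_goals try dsimp only
        · rw [lie_zero]; exact zero_mem M
        · intro u v hu hv; rw [lie_add]; exact add_mem hu hv
        · intro c u hu; rw [lie_smul]; exact Submodule.smul_mem _ _ hu
        · intro u v hu hv
          rw [leibniz_lie]
          refine add_mem ?_ (hMideal u _ hv)
          rw [← lie_skew]
          exact neg_mem (hMideal v _ hu)
      refine quotFree_induction (definingIdeal C 𝒜 Rel)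
        (P := fun u => ∀ v, ⁅u, v⁆ ∈ M) step1 ?_ ?_ ?_ ?_
      all_goals try dsimp only
      · intro v; rw [zero_lie]; exact zero_mem M
      · intro u u' hu hu' v; rw [add_lie]; exact add_mem (hu v) (hu' v)
      · intro c u hu v; rw [smul_lie]; exact Submodule.smul_mem _ _ (hu v)
      · intro u u' hu hu' v
        rw [lie_lie]
        exact sub_mem (hMideal u _ (hu' v)) (hMideal u' _ (hu v))
    refine le_antisymm ?_ (iSup_le fun i => ?_)
    · intro z hz
      exact derived_induction (zero_mem M) (fun u v hu hv => add_mem hu hv)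
        (fun c u hu => Submodule.smul_mem M c hu) (fun u v => hlie2 u v) z hz
    · rintro m ⟨z, hz, rfl⟩
      exact hom_derived (s i) z hz
  tfae_have 3 → 4 := by
    intro h3 u hu
    have hu' : u ∈ ⨆ i, Submodule.map (s i).toLinearMap
        (LieSubmodule.toSubmodule (LieAlgebra.derivedSeries C (SubLie C (ℬ i) Rel) 1)) := by
      rw [← h3]; exact hu
    refine Submodule.iSup_induction _ (motive := fun u => ∃ z : ∀ i, SubLie C (ℬ i) Rel,
        (∀ i, z i ∈ LieAlgebra.derivedSeries C (SubLie C (ℬ i) Rel) 1) ∧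
        u = ∑ i, s i (z i)) hu' ?_ ?_ ?_
    · rintro i m ⟨z0, hz0, rfl⟩
      refine ⟨Function.update (fun j => (0 : SubLie C (ℬ j) Rel)) i z0, fun j => ?_, ?_⟩
      · rcases eq_or_ne j i with rfl | hji
        · rw [Function.update_self]; exact hz0
        · rw [Function.update_of_ne hji]; exact zero_mem _
      · rw [Finset.sum_eq_single i]
        · rw [Function.update_self]; rfl
        · intro j _ hji; rw [Function.update_of_ne hji, map_zero (s j)]
        · intro h; exact absurd (Finset.mem_univ i) h
    · exact ⟨fun i => 0, fun i => zero_mem _, by simp⟩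
    · rintro a b ⟨za, hza, rfl⟩ ⟨zb, hzb, rfl⟩
      refine ⟨fun i => za i + zb i, fun i => add_mem (hza i) (hzb i), ?_⟩
      rw [← Finset.sum_add_distrib]
      exact Finset.sum_congr rfl fun i _ => (map_add (s i) _ _).symm
  tfae_have 4 → 5 := by
    intro h4 u hu v hv hpi
    obtain ⟨z, hz, hsum⟩ := h4 (u - v) (sub_mem hu hv)
    have hz0 : ∀ j, z j = 0 := by
      intro j
      have h0 : π j (u - v) = 0 := by rw [map_sub (π j), hpi j, sub_self]
      rw [hsum] at h0
      have e : π j (∑ i, s i (z i)) = ∑ i, π j (s i (z i)) :=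
        map_sum (π j).toLinearMap (fun i => s i (z i)) Finset.univ
      rw [e, Finset.sum_eq_single j (fun i _ hij => habel i j hij (z i) (hz i))
        (fun h => absurd (Finset.mem_univ j) h), hret j (z j)] at h0
      exact h0
    have hz' : u - v = 0 := by
      rw [hsum]
      refine Finset.sum_eq_zero fun i _ => ?_
      rw [hz0 i, map_zero (s i)]
    exact sub_eq_zero.mp hz'
  tfae_have 5 → 1 := by
    intro h5 i x hx r hr
    obtain ⟨z, hz, rfl⟩ := hr
    have hmem : ⁅arrMk C 𝒜 Rel (of C x), s i z⁆
        ∈ LieAlgebra.derivedSeries C (ArrLie C 𝒜 Rel) 1 :=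
      (LieAlgebra.derivedSeries C (ArrLie C 𝒜 Rel) 1).lie_mem (hom_derived (s i) z hz)
    refine h5 _ hmem 0 (zero_mem _) fun j => ?_
    rw [map_zero (π j), (π j).map_lie]
    rcases eq_or_ne j i with rfl | hji
    · rw [hπ₂ j x hx, zero_lie]
    · rw [habel i j hji.symm z hz, lie_zero]
  tfae_finish
end

section
/- Let ℬ_1,…,ℬ_k be pairwise disjoint closed sub-arrangements of a set-arrangement 𝒜 on X with ⋃_i ℬ_i = 𝒜, and let L be a Lie algebra of 𝒜 such that [x, im(s_{ℬ_i}')] = 0 for all i = 1,…,k and all x ∈ X \ supp(ℬ_i). Then L' = ⊕_{i=1}^k im(s_{ℬ_i}') (internal direct sum), [im(s_{ℬ_i}'), im(s_{ℬ_j}')] = 0 for i ≠ j, and L' is isomorphic as a Lie algebra to the direct product ⊕_{i=1}^k L_{ℬ_i}'. -/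
open FreeLieAlgebra

section GeneralLie

variable {C : Type*} [CommRing C] {M N : Type*} [LieRing M] [LieAlgebra C M]
  [LieRing N] [LieAlgebra C N]

/-- Induction principle for Lie algebras generated by a set. -/
theorem lie_gen_ind (S : Set M) (hS : LieSubalgebra.lieSpan C M S = ⊤)
    (p : M → Prop) (h0 : p 0) (hadd : ∀ x y, p x → p y → p (x + y))
    (hsmul : ∀ (c : C) x, p x → p (c • x))
    (hlie : ∀ x y, p x → p y → p ⁅x, y⁆) (hs : ∀ x ∈ S, p x) : ∀ x, p x := by
  intro x
  let K : LieSubalgebra C M :=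
    { carrier := {x | p x}
      add_mem' := fun ha hb => hadd _ _ ha hb
      zero_mem' := h0
      smul_mem' := fun c x hx => hsmul c x hx
      lie_mem' := fun ha hb => hlie _ _ ha hb }
  have : LieSubalgebra.lieSpan C M S ≤ K := LieSubalgebra.lieSpan_le.2 hs
  rw [hS] at this
  exact this (LieSubalgebra.mem_top x)

/-- The free Lie algebra is generated by its generators. -/
theorem free_lieSpan_top (Y : Type*) :
    LieSubalgebra.lieSpan C (FreeLieAlgebra C Y) (Set.range (of C)) = ⊤ := by
  set K := LieSubalgebra.lieSpan C (FreeLieAlgebra C Y) (Set.range (of C))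
  have h : ∀ y : Y, of C y ∈ K := fun y => LieSubalgebra.subset_lieSpan ⟨y, rfl⟩
  let g : FreeLieAlgebra C Y →ₗ⁅C⁆ K := lift C fun y => (⟨of C y, h y⟩ : K)
  have hcomp : ∀ x, (K.incl.comp g) x = (LieHom.id : FreeLieAlgebra C Y →ₗ⁅C⁆ _) x := by
    intro x
    refine LieHom.congr_fun (FreeLieAlgebra.hom_ext fun y => ?_) x
    simp [g, lift_of_apply]
  rw [eq_top_iff]
  intro x _
  have := hcomp x
  simp only [LieHom.comp_apply, LieHom.id_apply] at this
  rw [← this]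
  exact (g x).2

/-- Image of a generating set under a surjective morphism generates. -/
theorem lieSpan_image_top (f : M →ₗ⁅C⁆ N) (hf : Function.Surjective f) (S : Set M)
    (hS : LieSubalgebra.lieSpan C M S = ⊤) :
    LieSubalgebra.lieSpan C N (f '' S) = ⊤ := by
  rw [eq_top_iff]
  intro n _
  obtain ⟨m, rfl⟩ := hf n
  refine lie_gen_ind (C := C) S hS (fun m => f m ∈ LieSubalgebra.lieSpan C N (f '' S))
    ?_ ?_ ?_ ?_ ?_ m
  · simp
  · intro x y hx hy; rw [map_add f]; exact add_mem hx hy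
  · intro c x hx; rw [map_smul f]; exact Submodule.smul_mem _ _ hx
  · intro x y hx hy; rw [LieHom.map_lie]; exact LieSubalgebra.lie_mem _ hx hy
  · intro x hx; exact LieSubalgebra.subset_lieSpan ⟨x, hx, rfl⟩

/-- If images of generators pairwise commute, images of everything pairwise commute. -/
theorem comm_of_hom_gen (f : M →ₗ⁅C⁆ N) (S : Set M)
    (hS : LieSubalgebra.lieSpan C M S = ⊤)
    (hc : ∀ a ∈ S, ∀ b ∈ S, ⁅f a, f b⁆ = 0) : ∀ u v : M, ⁅f u, f v⁆ = 0 := by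
  have step1 : ∀ a ∈ S, ∀ v : M, ⁅f a, f v⁆ = 0 := by
    intro a ha
    refine lie_gen_ind (C := C) S hS (fun v => ⁅f a, f v⁆ = 0) ?_ ?_ ?_ ?_ ?_
    · simp
    · intro x y hx hy; rw [map_add f, lie_add, hx, hy, add_zero]
    · intro c x hx; rw [map_smul f, lie_smul, hx, smul_zero]
    · intro x y hx hy; rw [LieHom.map_lie, leibniz_lie, hx, hy, lie_zero, zero_lie, add_zero]
    · intro b hb; exact hc a ha b hb
  intro u v
  refine lie_gen_ind (C := C) S hS (fun u => ⁅f u, f v⁆ = 0) ?_ ?_ ?_ ?_ ?_ u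
  · simp
  · intro x y hx hy; rw [map_add f, add_lie, hx, hy, add_zero]
  · intro c x hx; rw [map_smul f, smul_lie, hx, smul_zero]
  · intro x y hx hy; rw [LieHom.map_lie, lie_lie, hx, hy, lie_zero, lie_zero, sub_zero]
  · intro a ha; exact step1 a ha v

/-- The derived subalgebra as a linear span of brackets. -/
theorem derived_eq_span :
    (LieSubmodule.toSubmodule (LieAlgebra.derivedSeries C M 1)) =
      Submodule.span C {m : M | ∃ x y : M, ⁅x, y⁆ = m} := by
  have : LieAlgebra.derivedSeries C M 1 = ⁅(⊤ : LieIdeal C M), (⊤ : LieIdeal C M)⁆ := by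
    rw [LieAlgebra.derivedSeries_def, LieAlgebra.derivedSeriesOfIdeal_succ,
      LieAlgebra.derivedSeriesOfIdeal_zero]
  rw [this, LieSubmodule.lieIdeal_oper_eq_linear_span']
  congr 1
  ext m
  constructor
  · rintro ⟨x, -, y, -, rfl⟩; exact ⟨x, y, rfl⟩
  · rintro ⟨x, y, rfl⟩; exact ⟨x, trivial, y, trivial, rfl⟩

theorem mem_derived_of_bracket (x y : M) : ⁅x, y⁆ ∈ LieAlgebra.derivedSeries C M 1 := by
  have : LieAlgebra.derivedSeries C M 1 = ⁅(⊤ : LieIdeal C M), (⊤ : LieIdeal C M)⁆ := by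
    rw [LieAlgebra.derivedSeries_def, LieAlgebra.derivedSeriesOfIdeal_succ,
      LieAlgebra.derivedSeriesOfIdeal_zero]
  rw [this]
  exact LieSubmodule.lie_mem_lie trivial trivial

/-- A morphism whose image is abelian kills the derived subalgebra. -/
theorem hom_kills_derived (f : M →ₗ⁅C⁆ N) (h : ∀ u v : M, ⁅f u, f v⁆ = 0) :
    ∀ r ∈ LieAlgebra.derivedSeries C M 1, f r = 0 := by
  intro r hr
  have hr' : r ∈ Submodule.span C {m : M | ∃ x y : M, ⁅x, y⁆ = m} := by
    rw [← derived_eq_span (C := C)]; exact hr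
  refine Submodule.span_induction ?_ ?_ ?_ ?_ hr'
  · rintro m ⟨x, y, rfl⟩; rw [LieHom.map_lie]; exact h x y
  · simp
  · intro x y _ _ hx hy; rw [map_add f, hx, hy, add_zero]
  · intro c x _ hx; rw [map_smul f, hx, smul_zero]

/-- Morphisms map the derived subalgebra into the derived subalgebra. -/
theorem hom_derived_le (f : M →ₗ⁅C⁆ N) :
    ∀ r ∈ LieAlgebra.derivedSeries C M 1, f r ∈ LieAlgebra.derivedSeries C N 1 := by
  intro r hr
  have hr' : r ∈ Submodule.span C {m : M | ∃ x y : M, ⁅x, y⁆ = m} := by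
    rw [← derived_eq_span (C := C)]; exact hr
  refine Submodule.span_induction ?_ ?_ ?_ ?_ hr'
  · rintro m ⟨x, y, rfl⟩; rw [LieHom.map_lie]; exact mem_derived_of_bracket _ _
  · simp
  · intro x y _ _ hx hy; rw [map_add f]; exact add_mem hx hy
  · intro c x _ hx; rw [map_smul f]; exact Submodule.smul_mem _ _ hx

/-- Extending invariance of a submodule from generators to the whole algebra. -/
theorem submodule_invariant_of_gen (S : Set M) (hS : LieSubalgebra.lieSpan C M S = ⊤)
    (W : Submodule C M) (hinv : ∀ a ∈ S, ∀ w ∈ W, ⁅a, w⁆ ∈ W) :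
    ∀ x : M, ∀ w ∈ W, ⁅x, w⁆ ∈ W := by
  refine lie_gen_ind (C := C) S hS (fun x => ∀ w ∈ W, ⁅x, w⁆ ∈ W) ?_ ?_ ?_ ?_ hinv
  · intro w hw; show ⁅(0 : M), w⁆ ∈ W; rw [zero_lie]; exact W.zero_mem
  · intro x y hx hy w hw; rw [add_lie]; exact W.add_mem (hx w hw) (hy w hw)
  · intro c x hx w hw; rw [smul_lie]; exact W.smul_mem _ (hx w hw)
  · intro x y hx hy w hw
    rw [lie_lie]
    exact W.sub_mem (hx _ (hy w hw)) (hy _ (hx w hw))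

/-- If `W` is an invariant submodule containing brackets of generators, it contains all
brackets. -/
theorem bracket_mem_of_gen (S : Set M) (hS : LieSubalgebra.lieSpan C M S = ⊤)
    (W : Submodule C M) (hinv : ∀ x : M, ∀ w ∈ W, ⁅x, w⁆ ∈ W)
    (hbr : ∀ a ∈ S, ∀ b ∈ S, ⁅a, b⁆ ∈ W) : ∀ x y : M, ⁅x, y⁆ ∈ W := by
  have step1 : ∀ a ∈ S, ∀ y : M, ⁅a, y⁆ ∈ W := by
    intro a ha
    refine lie_gen_ind (C := C) S hS (fun y => ⁅a, y⁆ ∈ W) ?_ ?_ ?_ ?_ (hbr a ha)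
    · show ⁅a, (0 : M)⁆ ∈ W; rw [lie_zero]; exact W.zero_mem
    · intro x y hx hy; rw [lie_add]; exact W.add_mem hx hy
    · intro c x hx; rw [lie_smul]; exact W.smul_mem _ hx
    · intro x y hx hy
      rw [leibniz_lie]
      refine W.add_mem ?_ (hinv x _ hy)
      rw [← lie_skew]
      exact W.neg_mem (hinv y _ hx)
  intro x y
  refine lie_gen_ind (C := C) S hS (fun x => ⁅x, y⁆ ∈ W) ?_ ?_ ?_ ?_
    (fun a ha => step1 a ha y) x
  · show ⁅(0 : M), y⁆ ∈ W; rw [zero_lie]; exact W.zero_mem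
  · intro x₁ x₂ h1 h2; rw [add_lie]; exact W.add_mem h1 h2
  · intro c x₁ h1; rw [smul_lie]; exact W.smul_mem _ h1
  · intro x₁ x₂ h1 h2; rw [lie_lie]; exact W.sub_mem (hinv x₁ _ h2) (hinv x₂ _ h1)

theorem lie_finset_sum {ι : Type*} (x : M) (t : Finset ι) (f : ι → M) :
    ⁅x, ∑ i ∈ t, f i⁆ = ∑ i ∈ t, ⁅x, f i⁆ := by
  classical
  induction t using Finset.induction with
  | empty => simp
  | insert _ _ h ih => rw [Finset.sum_insert h, Finset.sum_insert h, lie_add, ih]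

theorem finset_sum_lie {ι : Type*} (t : Finset ι) (f : ι → M) (y : M) :
    ⁅∑ i ∈ t, f i, y⁆ = ∑ i ∈ t, ⁅f i, y⁆ := by
  classical
  induction t using Finset.induction with
  | empty => simp
  | insert _ _ h ih => rw [Finset.sum_insert h, Finset.sum_insert h, add_lie, ih]

/-- The quotient map by a Lie ideal, as a morphism of Lie algebras. -/
def lieQuotMk (I : LieIdeal C M) : M →ₗ⁅C⁆ M ⧸ I where
  toLinearMap := (LieSubmodule.Quotient.mk' I).toLinearMap
  map_lie' := by intro x y; rfl

@[simp] theorem lieQuotMk_apply (I : LieIdeal C M) (x : M) :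
    lieQuotMk I x = LieSubmodule.Quotient.mk (N := I) x := rfl

theorem lieQuotMk_surjective (I : LieIdeal C M) : Function.Surjective (lieQuotMk I) :=
  LieSubmodule.Quotient.surjective_mk' I

/-- Lifting a Lie algebra morphism through a quotient. -/
noncomputable def lieQuotLift (I : LieIdeal C M) (f : M →ₗ⁅C⁆ N) (h : ∀ x ∈ I, f x = 0) :
    (M ⧸ I) →ₗ⁅C⁆ N where
  toLinearMap := Submodule.liftQ (LieSubmodule.toSubmodule I) f.toLinearMap
    (fun x hx => by simpa using h x hx)
  map_lie' := by
    intro x y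
    obtain ⟨x, rfl⟩ := Submodule.Quotient.mk_surjective _ x
    obtain ⟨y, rfl⟩ := Submodule.Quotient.mk_surjective _ y
    exact f.map_lie x y

@[simp] theorem lieQuotLift_mk (I : LieIdeal C M) (f : M →ₗ⁅C⁆ N) (h : ∀ x ∈ I, f x = 0)
    (x : M) : lieQuotLift I f h (LieSubmodule.Quotient.mk (N := I) x) = f x := rfl

end GeneralLie


variable (C : Type*) [CommRing C] {X : Type*}

open scoped DirectSum

set_option maxHeartbeats 2000000 in
/-- If `[x, im(s_{ℬ_i}')] = 0` for all `i` and `x ∈ X \ supp ℬ_i`, then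
`L' = ⊕_i im(s_{ℬ_i}')` (internal direct sum), `[im(s_{ℬ_i}'), im(s_{ℬ_j}')] = 0` for
`i ≠ j`, and `L'` is isomorphic as a Lie algebra to the direct product `⊕_i L_{ℬ_i}'`. -/
theorem statement16 {C : Type*} [CommRing C] {X : Type*} [Fintype X]
    (𝒜 : Set (Set X)) (Rel : ∀ A : Set X, Set (FreeLieAlgebra C A))
    (h𝒜 : IsSetArrangement 𝒜) (hRel : AdmissibleRel C 𝒜 Rel)
    (k : ℕ) (ℬ : Fin k → Set (Set X))
    (hclosed : ∀ i, IsClosedSub 𝒜 (ℬ i))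
    (hdisj : ∀ i j, i ≠ j → ℬ i ∩ ℬ j = ∅)
    (hcover : ⋃ i, ℬ i = 𝒜)
    (s : ∀ i, SubLie C (ℬ i) Rel →ₗ⁅C⁆ ArrLie C 𝒜 Rel)
    (hs : ∀ i, ∀ a : arrSupp (ℬ i),
      s i (subMk C (ℬ i) Rel (of C a)) = arrMk C 𝒜 Rel (of C (a : X)))
    (hcomm : ∀ i, ∀ x : X, x ∉ arrSupp (ℬ i) →
      ∀ r ∈ s i ''
        (LieAlgebra.derivedSeries C (SubLie C (ℬ i) Rel) 1 : Set (SubLie C (ℬ i) Rel)),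
        ⁅arrMk C 𝒜 Rel (of C x), r⁆ = 0) :
    -- `L' = Σ_i im(s_{ℬ_i}')` …
    (LieSubmodule.toSubmodule (LieAlgebra.derivedSeries C (ArrLie C 𝒜 Rel) 1) =
      ⨆ i, Submodule.map (s i).toLinearMap
        (LieSubmodule.toSubmodule (LieAlgebra.derivedSeries C (SubLie C (ℬ i) Rel) 1))) ∧
    -- … and the sum is direct
    (∀ r : Fin k → ArrLie C 𝒜 Rel,
      (∀ i, r i ∈ s i ''
        (LieAlgebra.derivedSeries C (SubLie C (ℬ i) Rel) 1 : Set (SubLie C (ℬ i) Rel))) →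
      ∑ i, r i = 0 → ∀ i, r i = 0) ∧
    -- `[im(s_{ℬ_i}'), im(s_{ℬ_j}')] = 0` for `i ≠ j`
    (∀ i j, i ≠ j →
      ∀ r ∈ s i ''
        (LieAlgebra.derivedSeries C (SubLie C (ℬ i) Rel) 1 : Set (SubLie C (ℬ i) Rel)),
      ∀ t ∈ s j ''
        (LieAlgebra.derivedSeries C (SubLie C (ℬ j) Rel) 1 : Set (SubLie C (ℬ j) Rel)),
        ⁅r, t⁆ = 0) ∧
    -- `L' ≅ ⊕_i L_{ℬ_i}'` as Lie algebras
    Nonempty (↥(LieAlgebra.derivedSeries C (ArrLie C 𝒜 Rel) 1) ≃ₗ⁅C⁆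
      (⨁ i, ↥(LieAlgebra.derivedSeries C (SubLie C (ℬ i) Rel) 1))) := by
  classical
  -- abbreviations
  have hBsubA : ∀ i, ℬ i ⊆ 𝒜 := fun i => (hclosed i).1
  have hInA : ∀ {A : Set X}, A ∈ 𝒜 → ∃ i, A ∈ ℬ i := by
    intro A hA
    rw [← hcover] at hA
    exact Set.mem_iUnion.1 hA
  -- generating sets
  set SL : Set (ArrLie C 𝒜 Rel) :=
    Set.range (⇑(lieQuotMk (definingIdeal C 𝒜 Rel)) ∘ of C) with hSLdef
  have hSL : LieSubalgebra.lieSpan C (ArrLie C 𝒜 Rel) SL = ⊤ := by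
    have := lieSpan_image_top (lieQuotMk (definingIdeal C 𝒜 Rel))
      (lieQuotMk_surjective _) _ (free_lieSpan_top X)
    rwa [← Set.range_comp] at this
  have hSi : ∀ i, LieSubalgebra.lieSpan C (SubLie C (ℬ i) Rel)
      (Set.range (⇑(lieQuotMk (subIdeal C (ℬ i) Rel)) ∘ of C)) = ⊤ := by
    intro i
    have := lieSpan_image_top (lieQuotMk (subIdeal C (ℬ i) Rel))
      (lieQuotMk_surjective _) _ (free_lieSpan_top (arrSupp (ℬ i)))
    rwa [← Set.range_comp] at this
  -- the projections p i
  have hker : ∀ i, ∀ z ∈ definingIdeal C 𝒜 Rel, subProj C (ℬ i) Rel z = 0 := by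
    intro i
    have hproj : ∀ w : X, subProj C (ℬ i) Rel (of C w) =
        if h : w ∈ arrSupp (ℬ i) then subMk C (ℬ i) Rel (of C ⟨w, h⟩) else 0 :=
      fun w => lift_of_apply _ _
    have hsub : ({z | ∃ x y : X, (∀ A ∈ 𝒜, ¬({x, y} : Set X) ⊆ A) ∧ z = ⁅of C x, of C y⁆} ∪
        ⋃ A, ⋃ (_ : A ∈ 𝒜), inclX C A '' Rel A) ⊆ ↑(subProj C (ℬ i) Rel).ker := by
      rintro z (⟨x, y, hxy, rfl⟩ | hz)
      · rw [SetLike.mem_coe, LieHom.mem_ker, (subProj C (ℬ i) Rel).map_lie, hproj, hproj]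
        by_cases hx : x ∈ arrSupp (ℬ i)
        · by_cases hy : y ∈ arrSupp (ℬ i)
          · rw [dif_pos hx, dif_pos hy]
            have heq : (⁅subMk C (ℬ i) Rel (of C ⟨x, hx⟩), subMk C (ℬ i) Rel (of C ⟨y, hy⟩)⁆ :
                SubLie C (ℬ i) Rel) = subMk C (ℬ i) Rel
                ⁅of C (⟨x, hx⟩ : arrSupp (ℬ i)), of C (⟨y, hy⟩ : arrSupp (ℬ i))⁆ := rfl
            rw [heq]
            refine LieSubmodule.Quotient.mk_eq_zero'.mpr ?_
            apply LieSubmodule.subset_lieSpan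
            apply Set.mem_union_right
            exact ⟨⟨x, hx⟩, ⟨y, hy⟩, fun B hB => hxy B (hBsubA i hB), rfl⟩
          · rw [dif_neg hy, lie_zero]
        · rw [dif_neg hx, zero_lie]
      · simp only [Set.mem_iUnion] at hz
        obtain ⟨A, hA, r, hr, rfl⟩ := hz
        rw [SetLike.mem_coe, LieHom.mem_ker]
        by_cases hAi : A ∈ ℬ i
        · have key : ∀ w, subProj C (ℬ i) Rel (inclX C A w) =
              subMk C (ℬ i) Rel (inclSub C (Set.subset_sUnion_of_mem hAi) w) := by
            intro w
            have hhom := FreeLieAlgebra.hom_ext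
              (F₁ := (subProj C (ℬ i) Rel).comp (inclX C A))
              (F₂ := (lieQuotMk (subIdeal C (ℬ i) Rel)).comp
                (inclSub C (Set.subset_sUnion_of_mem hAi)))
              (fun a => by
                show subProj C (ℬ i) Rel (inclX C A (of C a)) =
                  lieQuotMk (subIdeal C (ℬ i) Rel) (inclSub C
                    (Set.subset_sUnion_of_mem hAi) (of C a))
                have hmem : (a : X) ∈ arrSupp (ℬ i) := ⟨A, hAi, a.2⟩
                rw [inclX, inclSub, lift_of_apply, lift_of_apply, hproj, dif_pos hmem]
                rfl)
            exact LieHom.congr_fun hhom w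
          rw [key]
          refine LieSubmodule.Quotient.mk_eq_zero'.mpr ?_
          apply LieSubmodule.subset_lieSpan
          apply Set.mem_union_left
          exact Set.mem_iUnion.2 ⟨A, Set.mem_iUnion.2 ⟨hAi, ⟨r, hr, rfl⟩⟩⟩
        · set φ := (subProj C (ℬ i) Rel).comp (inclX C A) with hφ
          have hφa : ∀ a : A, φ (of C a) =
              if h : (a : X) ∈ arrSupp (ℬ i) then subMk C (ℬ i) Rel (of C ⟨a, h⟩) else 0 := by
            intro a
            show subProj C (ℬ i) Rel (inclX C A (of C a)) = _
            rw [inclX, lift_of_apply, hproj]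
          have habel : ∀ u v, ⁅φ u, φ v⁆ = 0 := by
            refine comm_of_hom_gen φ _ (free_lieSpan_top (A : Set X).Elem) ?_
            rintro _ ⟨a, rfl⟩ _ ⟨b, rfl⟩
            rw [hφa, hφa]
            by_cases ha : (a : X) ∈ arrSupp (ℬ i)
            · by_cases hb : (b : X) ∈ arrSupp (ℬ i)
              · rw [dif_pos ha, dif_pos hb]
                have hss := (hclosed i).2 A hA hAi
                have heq : (⟨(a : X), ha⟩ : arrSupp (ℬ i)) = ⟨(b : X), hb⟩ :=
                  Subtype.ext (hss ⟨a.2, ha⟩ ⟨b.2, hb⟩)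
                rw [heq, lie_self]
              · rw [dif_neg hb, lie_zero]
            · rw [dif_neg ha, zero_lie]
          exact hom_kills_derived φ habel r (hRel A hA hr)
    have hle : definingIdeal C 𝒜 Rel ≤ (subProj C (ℬ i) Rel).ker :=
      LieSubmodule.lieSpan_le.mpr hsub
    intro z hz
    exact LieHom.mem_ker.1 (hle hz)
  set p : ∀ i, ArrLie C 𝒜 Rel →ₗ⁅C⁆ SubLie C (ℬ i) Rel :=
    fun i => lieQuotLift _ (subProj C (ℬ i) Rel) (hker i) with hpdef
  have hpmk : ∀ i (u : FreeLieAlgebra C X),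
      p i (arrMk C 𝒜 Rel u) = subProj C (ℬ i) Rel u := fun i u => rfl
  have hps : ∀ i (x : X) (hx : x ∈ arrSupp (ℬ i)),
      p i (arrMk C 𝒜 Rel (of C x)) = subMk C (ℬ i) Rel (of C ⟨x, hx⟩) := by
    intro i x hx
    rw [hpmk, subProj, lift_of_apply, dif_pos hx]
  have hps0 : ∀ i (x : X), x ∉ arrSupp (ℬ i) →
      p i (arrMk C 𝒜 Rel (of C x)) = 0 := by
    intro i x hx
    rw [hpmk, subProj, lift_of_apply, dif_neg hx]
  have hpsid : ∀ i (u : SubLie C (ℬ i) Rel), p i (s i u) = u := by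
    intro i
    refine lie_gen_ind (C := C) _ (hSi i) (fun u => p i (s i u) = u) ?_ ?_ ?_ ?_ ?_
    · show p i (s i 0) = 0
      rw [map_zero (s i), map_zero (p i)]
    · intro x y hx hy; rw [map_add (s i), map_add (p i), hx, hy]
    · intro c x hx; rw [map_smul (s i), map_smul (p i), hx]
    · intro x y hx hy; rw [(s i).map_lie, (p i).map_lie, hx, hy]
    · rintro _ ⟨a, rfl⟩
      show p i (s i (subMk C (ℬ i) Rel (of C a))) = subMk C (ℬ i) Rel (of C a)
      rw [hs i a, hps i (a : X) a.2, Subtype.coe_eta]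
  have hpzero : ∀ i j, j ≠ i → ∀ v ∈ LieAlgebra.derivedSeries C (SubLie C (ℬ j) Rel) 1,
      p i (s j v) = 0 := by
    intro i j hij
    set f := (p i).comp (s j) with hf
    have hfa : ∀ a : arrSupp (ℬ j), f (subMk C (ℬ j) Rel (of C a)) =
        if h : (a : X) ∈ arrSupp (ℬ i) then subMk C (ℬ i) Rel (of C ⟨a, h⟩) else 0 := by
      intro a
      show p i (s j (subMk C (ℬ j) Rel (of C a))) = _
      rw [hs j a, hpmk, subProj, lift_of_apply]
    have habel : ∀ u w, ⁅f u, f w⁆ = 0 := by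
      refine comm_of_hom_gen f _ (hSi j) ?_
      rintro _ ⟨a, rfl⟩ _ ⟨b, rfl⟩
      show ⁅f (subMk C (ℬ j) Rel (of C a)), f (subMk C (ℬ j) Rel (of C b))⁆ = 0
      rw [hfa, hfa]
      by_cases ha : (a : X) ∈ arrSupp (ℬ i)
      · by_cases hb : (b : X) ∈ arrSupp (ℬ i)
        · rw [dif_pos ha, dif_pos hb]
          by_cases hB : ∃ B ∈ ℬ i, ({(a : X), (b : X)} : Set X) ⊆ B
          · obtain ⟨B, hBi, hsubB⟩ := hB
            have hBj : B ∉ ℬ j := by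
              intro hBj
              have hmem : B ∈ ℬ i ∩ ℬ j := ⟨hBi, hBj⟩
              rw [hdisj i j (Ne.symm hij)] at hmem
              exact hmem
            have hss := (hclosed j).2 B (hBsubA i hBi) hBj
            have heq : (⟨(a : X), ha⟩ : arrSupp (ℬ i)) = ⟨(b : X), hb⟩ := by
              refine Subtype.ext (hss ⟨hsubB (by simp), a.2⟩ ⟨hsubB (by simp), b.2⟩)
            rw [heq, lie_self]
          · push_neg at hB
            have heq2 : (⁅subMk C (ℬ i) Rel (of C ⟨a, ha⟩),
                subMk C (ℬ i) Rel (of C ⟨b, hb⟩)⁆ : SubLie C (ℬ i) Rel) =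
                subMk C (ℬ i) Rel
                ⁅of C (⟨(a : X), ha⟩ : arrSupp (ℬ i)), of C (⟨(b : X), hb⟩ : arrSupp (ℬ i))⁆ := rfl
            rw [heq2]
            refine LieSubmodule.Quotient.mk_eq_zero'.mpr ?_
            apply LieSubmodule.subset_lieSpan
            apply Set.mem_union_right
            exact ⟨⟨a, ha⟩, ⟨b, hb⟩, fun B hB' hsubB => hB B hB' hsubB, rfl⟩
        · rw [dif_neg hb, lie_zero]
      · rw [dif_neg ha, zero_lie]
    exact fun v hv => hom_kills_derived f habel v hv
  -- the submodules W i
  set W : Fin k → Submodule C (ArrLie C 𝒜 Rel) := fun i =>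
    Submodule.map (s i).toLinearMap
      (LieSubmodule.toSubmodule (LieAlgebra.derivedSeries C (SubLie C (ℬ i) Rel) 1)) with hWdef
  have hWinv : ∀ i, ∀ x : ArrLie C 𝒜 Rel, ∀ w ∈ W i, ⁅x, w⁆ ∈ W i := by
    intro i
    refine submodule_invariant_of_gen SL hSL (W i) ?_
    rintro _ ⟨x, rfl⟩ _ ⟨u, hu, rfl⟩
    show ⁅arrMk C 𝒜 Rel (of C x), (s i).toLinearMap u⁆ ∈ W i
    by_cases hx : x ∈ arrSupp (ℬ i)
    · have : ⁅arrMk C 𝒜 Rel (of C x), (s i).toLinearMap u⁆ =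
          (s i).toLinearMap ⁅subMk C (ℬ i) Rel (of C ⟨x, hx⟩), u⁆ := by
        show _ = s i _
        rw [(s i).map_lie, hs i ⟨x, hx⟩]
        rfl
      rw [this]
      exact Submodule.mem_map_of_mem
        ((LieAlgebra.derivedSeries C (SubLie C (ℬ i) Rel) 1).lie_mem hu)
    · rw [hcomm i x hx ((s i).toLinearMap u) ⟨u, hu, rfl⟩]
      exact (W i).zero_mem
  have hWsupinv : ∀ x : ArrLie C 𝒜 Rel, ∀ w ∈ ⨆ i, W i, ⁅x, w⁆ ∈ ⨆ i, W i := by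
    intro x w hw
    refine Submodule.iSup_induction (motive := fun w => ⁅x, w⁆ ∈ ⨆ i, W i) W hw ?_ ?_ ?_
    · intro i w hw
      exact Submodule.mem_iSup_of_mem i (hWinv i x w hw)
    · show ⁅x, (0 : ArrLie C 𝒜 Rel)⁆ ∈ ⨆ i, W i
      rw [lie_zero]; exact Submodule.zero_mem _
    · intro y z hy hz
      show ⁅x, y + z⁆ ∈ ⨆ i, W i
      rw [lie_add]; exact Submodule.add_mem _ hy hz
  have hbrGen : ∀ x y : X,
      ⁅arrMk C 𝒜 Rel (of C x), arrMk C 𝒜 Rel (of C y)⁆ ∈ ⨆ i, W i := by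
    intro x y
    by_cases hA : ∃ A ∈ 𝒜, ({x, y} : Set X) ⊆ A
    · obtain ⟨A, hA, hxy⟩ := hA
      obtain ⟨i, hAi⟩ := hInA hA
      have hx : x ∈ arrSupp (ℬ i) := ⟨A, hAi, hxy (by simp)⟩
      have hy : y ∈ arrSupp (ℬ i) := ⟨A, hAi, hxy (by simp)⟩
      have key : ⁅arrMk C 𝒜 Rel (of C x), arrMk C 𝒜 Rel (of C y)⁆ =
          s i ⁅subMk C (ℬ i) Rel (of C ⟨x, hx⟩), subMk C (ℬ i) Rel (of C ⟨y, hy⟩)⁆ := by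
        rw [(s i).map_lie, hs i ⟨x, hx⟩, hs i ⟨y, hy⟩]
      rw [key]
      exact Submodule.mem_iSup_of_mem i
        (Submodule.mem_map_of_mem (mem_derived_of_bracket _ _))
    · have heq : ⁅arrMk C 𝒜 Rel (of C x), arrMk C 𝒜 Rel (of C y)⁆ =
          arrMk C 𝒜 Rel ⁅of C x, of C y⁆ := rfl
      rw [heq]
      have hz : arrMk C 𝒜 Rel ⁅of C x, of C y⁆ = 0 := by
        refine LieSubmodule.Quotient.mk_eq_zero'.mpr ?_
        apply LieSubmodule.subset_lieSpan
        apply Set.mem_union_left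
        exact ⟨x, y, fun A hA' hsub => hA ⟨A, hA', hsub⟩, rfl⟩
      rw [hz]
      exact Submodule.zero_mem _
  -- Part 1
  have part1 : LieSubmodule.toSubmodule (LieAlgebra.derivedSeries C (ArrLie C 𝒜 Rel) 1) =
      ⨆ i, Submodule.map (s i).toLinearMap
        (LieSubmodule.toSubmodule (LieAlgebra.derivedSeries C (SubLie C (ℬ i) Rel) 1)) := by
    apply le_antisymm
    · rw [derived_eq_span (C := C)]
      rw [Submodule.span_le]
      rintro z ⟨x, y, rfl⟩
      refine bracket_mem_of_gen SL hSL _ hWsupinv ?_ x y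
      rintro _ ⟨x, rfl⟩ _ ⟨y, rfl⟩
      exact hbrGen x y
    · refine iSup_le fun i => ?_
      rintro z ⟨u, hu, rfl⟩
      exact hom_derived_le (s i) u hu
  -- Part 2
  have part2 : ∀ r : Fin k → ArrLie C 𝒜 Rel,
      (∀ i, r i ∈ s i ''
        (LieAlgebra.derivedSeries C (SubLie C (ℬ i) Rel) 1 :
          Set (SubLie C (ℬ i) Rel))) →
      ∑ i, r i = 0 → ∀ i, r i = 0 := by
    intro r hr hsum i
    obtain ⟨u, hu, hru⟩ := hr i
    have hmsum : p i (∑ j, r j) = ∑ j, p i (r j) := map_sum (p i).toLinearMap r Finset.univ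
    have h1 : p i (∑ j, r j) = u := by
      rw [hmsum]
      rw [Finset.sum_eq_single i]
      · rw [← hru, hpsid]
      · intro j _ hj
        obtain ⟨v, hv, hrv⟩ := hr j
        rw [← hrv]
        exact hpzero i j hj v hv
      · intro h; exact absurd (Finset.mem_univ i) h
    rw [hsum, map_zero (p i)] at h1
    rw [← hru, ← h1, map_zero (s i)]
  -- Part 3
  have part3 : ∀ i j, i ≠ j →
      ∀ r ∈ s i '' (LieAlgebra.derivedSeries C (SubLie C (ℬ i) Rel) 1 :
        Set (SubLie C (ℬ i) Rel)),
      ∀ t ∈ s j '' (LieAlgebra.derivedSeries C (SubLie C (ℬ j) Rel) 1 :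
        Set (SubLie C (ℬ j) Rel)), ⁅r, t⁆ = 0 := by
    intro i j hij r hr t ht
    obtain ⟨u, hu, rfl⟩ := hr
    obtain ⟨v, hv, rfl⟩ := ht
    have hu' : u ∈ LieSubmodule.toSubmodule
        (LieAlgebra.derivedSeries C (SubLie C (ℬ i) Rel) 1) := hu
    have hv' : v ∈ LieSubmodule.toSubmodule
        (LieAlgebra.derivedSeries C (SubLie C (ℬ j) Rel) 1) := hv
    have hWi : ⁅s i u, s j v⁆ ∈ W i := by
      rw [← lie_skew]
      exact (W i).neg_mem (hWinv i (s j v) (s i u) ⟨u, hu', rfl⟩)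
    have hWj : ⁅s i u, s j v⁆ ∈ W j :=
      hWinv j (s i u) (s j v) ⟨v, hv', rfl⟩
    obtain ⟨a, ha, hEa⟩ := hWi
    obtain ⟨b, hb, hEb⟩ := hWj
    have h0 : a = 0 := by
      have h1 : p i ((s i).toLinearMap a) = a := hpsid i a
      have h2 : p i ((s j).toLinearMap b) = 0 := hpzero i j (Ne.symm hij) b hb
      rw [hEa, ← hEb] at h1
      rw [h2] at h1
      exact h1.symm
    rw [← hEa, h0]
    exact map_zero (s i).toLinearMap
  refine ⟨part1, part2, part3, ?_⟩
  -- Part 4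
  have hmem4 : ∀ i (u : ↥(LieAlgebra.derivedSeries C (SubLie C (ℬ i) Rel) 1)),
      s i (u : SubLie C (ℬ i) Rel) ∈ LieAlgebra.derivedSeries C (ArrLie C 𝒜 Rel) 1 :=
    fun i u => hom_derived_le (s i) _ u.2
  let F : ∀ i : Fin k, ↥(LieAlgebra.derivedSeries C (SubLie C (ℬ i) Rel) 1) →ₗ[C]
      ↥(LieAlgebra.derivedSeries C (ArrLie C 𝒜 Rel) 1) := fun i =>
    { toFun := fun u => ⟨s i (u : SubLie C (ℬ i) Rel), hmem4 i u⟩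
      map_add' := by
        intro a b
        apply Subtype.ext
        show s i ((a : SubLie C (ℬ i) Rel) + b) = _
        rw [map_add (s i)]
        rfl
      map_smul' := by
        intro c a
        apply Subtype.ext
        show s i (c • (a : SubLie C (ℬ i) Rel)) = _
        rw [map_smul (s i)]
        rfl }
  let Φ : (⨁ i : Fin k, ↥(LieAlgebra.derivedSeries C (SubLie C (ℬ i) Rel) 1)) →ₗ[C]
      ↥(LieAlgebra.derivedSeries C (ArrLie C 𝒜 Rel) 1) := DirectSum.toModule C (Fin k) _ F
  have hΦof : ∀ (i : Fin k) u, Φ (DirectSum.lof C (Fin k)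
      (fun j => ↥(LieAlgebra.derivedSeries C (SubLie C (ℬ j) Rel) 1)) i u) = F i u :=
    by
    intro i u
    show DirectSum.toModule C (Fin k) (↥(LieAlgebra.derivedSeries C (ArrLie C 𝒜 Rel) 1)) F
      (DirectSum.lof C (Fin k)
        (fun j => ↥(LieAlgebra.derivedSeries C (SubLie C (ℬ j) Rel) 1)) i u) = F i u
    exact DirectSum.toModule_lof (R := C) (ι := Fin k)
      (M := fun j => ↥(LieAlgebra.derivedSeries C (SubLie C (ℬ j) Rel) 1))
      (N := ↥(LieAlgebra.derivedSeries C (ArrLie C 𝒜 Rel) 1)) (φ := F) i u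
  have hΦcoe : ∀ x, ((Φ x : ↥(LieAlgebra.derivedSeries C (ArrLie C 𝒜 Rel) 1)) :
      ArrLie C 𝒜 Rel) = ∑ i, s i ((x i : SubLie C (ℬ i) Rel)) := by
    intro x
    conv_lhs => rw [← DirectSum.sum_univ_of x]
    rw [map_sum, AddSubmonoidClass.coe_finset_sum]
    refine Finset.sum_congr rfl fun i _ => ?_
    rw [← DirectSum.lof_eq_of C, hΦof]
    rfl
  have hker0 : ∀ x, Φ x = 0 → x = 0 := by
    intro x hx
    have hcoe : ∑ i, s i ((x i : SubLie C (ℬ i) Rel)) = 0 := by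
      have h' := hΦcoe x
      rw [hx] at h'
      simpa using h'.symm
    have hzero := part2 (fun i => s i ((x i : SubLie C (ℬ i) Rel)))
      (fun i => ⟨(x i : SubLie C (ℬ i) Rel), (x i).2, rfl⟩) hcoe
    have hxi : ∀ i, x i = 0 := by
      intro i
      have h1 : p i (s i ((x i : SubLie C (ℬ i) Rel))) = (x i : SubLie C (ℬ i) Rel) :=
        hpsid i _
      have hz2 : s i ((x i : SubLie C (ℬ i) Rel)) = 0 := hzero i
      rw [hz2, map_zero (p i)] at h1
      exact Subtype.ext h1.symm
    exact DFinsupp.ext fun i => by rw [hxi i]; rfl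
  have hinj : Function.Injective Φ := by
    intro a b hab
    have h0 : Φ (a - b) = 0 := by rw [map_sub, hab, sub_self]
    have := hker0 _ h0
    exact sub_eq_zero.1 this
  have hsurj : Function.Surjective Φ := by
    intro z
    have hz : (z : ArrLie C 𝒜 Rel) ∈ ⨆ i, W i := by
      rw [hWdef, ← part1]
      exact z.2
    have hex : ∃ x, ((Φ x : ↥(LieAlgebra.derivedSeries C (ArrLie C 𝒜 Rel) 1)) :
        ArrLie C 𝒜 Rel) = (z : ArrLie C 𝒜 Rel) := by
      refine Submodule.iSup_induction
        (motive := fun w => ∃ x, ((Φ x : ↥(LieAlgebra.derivedSeries C (ArrLie C 𝒜 Rel) 1)) :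
          ArrLie C 𝒜 Rel) = w) W hz ?_ ?_ ?_
      · rintro i w ⟨u, hu, rfl⟩
        refine ⟨DirectSum.lof C (Fin k)
          (fun j => ↥(LieAlgebra.derivedSeries C (SubLie C (ℬ j) Rel) 1)) i ⟨u, hu⟩, ?_⟩
        rw [hΦof]
        rfl
      · exact ⟨0, by rw [map_zero]; rfl⟩
      · rintro a b ⟨xa, ha⟩ ⟨xb, hb⟩
        refine ⟨xa + xb, ?_⟩
        rw [map_add, ← ha, ← hb]
        rfl
    obtain ⟨x, hx⟩ := hex
    exact ⟨x, Subtype.ext hx⟩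
  have hbrsum : ∀ x y : ⨁ i : Fin k, ↥(LieAlgebra.derivedSeries C (SubLie C (ℬ i) Rel) 1),
      ((Φ ⁅x, y⁆ : ↥(LieAlgebra.derivedSeries C (ArrLie C 𝒜 Rel) 1)) : ArrLie C 𝒜 Rel) =
        ⁅((Φ x : ↥(LieAlgebra.derivedSeries C (ArrLie C 𝒜 Rel) 1)) : ArrLie C 𝒜 Rel),
          ((Φ y : ↥(LieAlgebra.derivedSeries C (ArrLie C 𝒜 Rel) 1)) : ArrLie C 𝒜 Rel)⁆ := by
    intro x y
    rw [hΦcoe, hΦcoe, hΦcoe]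
    have hdiag : ∀ i : Fin k, s i ((⁅x, y⁆ i : SubLie C (ℬ i) Rel)) =
        ⁅s i ((x i : SubLie C (ℬ i) Rel)), s i ((y i : SubLie C (ℬ i) Rel))⁆ := by
      intro i
      have hxyi : ⁅x, y⁆ i = ⁅x i, y i⁆ := DirectSum.bracket_apply _ x y i
      rw [hxyi]
      have hco : ((⁅x i, y i⁆ : ↥(LieAlgebra.derivedSeries C (SubLie C (ℬ i) Rel) 1)) :
          SubLie C (ℬ i) Rel) = ⁅(x i : SubLie C (ℬ i) Rel), (y i : SubLie C (ℬ i) Rel)⁆ := rfl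
      rw [hco, (s i).map_lie]
    rw [finset_sum_lie]
    refine Finset.sum_congr rfl fun i _ => ?_
    rw [lie_finset_sum, hdiag i]
    refine (Finset.sum_eq_single
      (f := fun j => ⁅s i ((x i : SubLie C (ℬ i) Rel)), s j ((y j : SubLie C (ℬ j) Rel))⁆)
      i (fun j _ hj => ?_) (fun h => absurd (Finset.mem_univ i) h)).symm
    exact part3 i j (Ne.symm hj) (s i _) ⟨(x i : SubLie C (ℬ i) Rel), (x i).2, rfl⟩
      (s j _) ⟨(y j : SubLie C (ℬ j) Rel), (y j).2, rfl⟩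
  let ΦLie : (⨁ i : Fin k, ↥(LieAlgebra.derivedSeries C (SubLie C (ℬ i) Rel) 1)) →ₗ⁅C⁆
      ↥(LieAlgebra.derivedSeries C (ArrLie C 𝒜 Rel) 1) :=
    { Φ with
      map_lie' := by
        intro x y
        apply Subtype.ext
        exact hbrsum x y }
  have hbij : Function.Bijective ΦLie := ⟨fun a b h => hinj h, fun z => hsurj z⟩
  exact ⟨(LieEquiv.ofBijective ΦLie hbij).symm⟩
end
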